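/- arXiv:1904.04522 — 2 statements merged into one kernel-verified Lean document; each statement's English description precedes it below -/
import Mathlib

section
/- Suppose F₂ is atomless conditionally to F₁, let U be an F₂-measurable random variable uniformly distributed on [0, 1] and independent of F₁, and let u_{1,2} : L^∞(F₂) → L^∞(F₁) be a conditional coherent utility function having the Fatou property and the Lebesgue property. Then for every F₁-measurable function h : Ω → [0, 1] there exists an F₁-measurable function g : Ω → [0, 1] such that the set B_g = {U ≤ g} satisfies u_{1,2}(1_{B_g}) = h almost surely. -/
open MeasureTheory

/-- `F₂` is atomless conditionally to `F₁`: for every `A ∈ F₂` there is `B ∈ F₂`, `B ⊆ A`,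
with `0 < E[1_B | F₁] < E[1_A | F₁]` almost surely on the set `{E[1_A | F₁] > 0}`. -/
def CondAtomless {Ω : Type*} (m1 m2 : MeasurableSpace Ω) (μ : @Measure Ω m2) : Prop :=
  ∀ A : Set Ω, MeasurableSet[m2] A →
    ∃ B : Set Ω, MeasurableSet[m2] B ∧ B ⊆ A ∧
      ∀ᵐ ω ∂μ, 0 < (μ[A.indicator (fun _ => (1 : ℝ)) | m1]) ω →
        0 < (μ[B.indicator (fun _ => (1 : ℝ)) | m1]) ω ∧
        (μ[B.indicator (fun _ => (1 : ℝ)) | m1]) ω <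
          (μ[A.indicator (fun _ => (1 : ℝ)) | m1]) ω

/-- A real-valued function is (uniformly) bounded. -/
def Bdd {Ω : Type*} (ξ : Ω → ℝ) : Prop := ∃ C : ℝ, ∀ ω, |ξ ω| ≤ C

/-- A conditional coherent utility function `u : L^∞(F₂) → L^∞(F₁)`:  it maps bounded
`F₂`-measurable functions to bounded `F₁`-measurable ones, `u(0) = 0`, it is monotone
(`ξ ≥ 0 ⇒ u(ξ) ≥ 0`), concave, positively homogeneous with respect to nonnegative bounded
`F₁`-measurable weights, and `F₁`-translation invariant. -/
structure CondCoherentUtility {Ω : Type*} (m1 m2 : MeasurableSpace Ω) (μ : @MeasureTheory.Measure Ω m2)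
    (u : (Ω → ℝ) → Ω → ℝ) : Prop where
  map_zero : u 0 =ᵐ[μ] 0
  measurable_map : ∀ ξ, Measurable[m2] ξ → Bdd ξ → Measurable[m1] (u ξ) ∧ Bdd (u ξ)
  nonneg : ∀ ξ, Measurable[m2] ξ → Bdd ξ → (∀ ω, 0 ≤ ξ ω) → ∀ᵐ ω ∂μ, 0 ≤ u ξ ω
  concave : ∀ ξ η lam, Measurable[m2] ξ → Bdd ξ → Measurable[m2] η → Bdd η →
    Measurable[m1] lam → (∀ ω, lam ω ∈ Set.Icc (0 : ℝ) 1) →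
    ∀ᵐ ω ∂μ, lam ω * u ξ ω + (1 - lam ω) * u η ω ≤
      u (fun ω' => lam ω' * ξ ω' + (1 - lam ω') * η ω') ω
  poshom : ∀ ξ lam, Measurable[m2] ξ → Bdd ξ → Measurable[m1] lam → Bdd lam →
    (∀ ω, 0 ≤ lam ω) →
    u (fun ω' => lam ω' * ξ ω') =ᵐ[μ] fun ω => lam ω * u ξ ω
  transl : ∀ ξ a, Measurable[m2] ξ → Bdd ξ → Measurable[m1] a → Bdd a →
    u (ξ + a) =ᵐ[μ] u ξ + a

/-- The Lebesgue property: for any uniformly bounded sequence of `F₂`-measurable functions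
converging in probability, the utilities converge in probability. -/
def LebesgueProp {Ω : Type*} {m2 : MeasurableSpace Ω} (μ : MeasureTheory.Measure Ω)
    (u : (Ω → ℝ) → Ω → ℝ) : Prop :=
  ∀ (ξ : ℕ → Ω → ℝ) (η : Ω → ℝ), (∀ n, Measurable[m2] (ξ n)) → Measurable[m2] η →
    (∃ C : ℝ, ∀ n ω, |ξ n ω| ≤ C) → Bdd η →
    MeasureTheory.TendstoInMeasure μ ξ Filter.atTop η →
    MeasureTheory.TendstoInMeasure μ (fun n => u (ξ n)) Filter.atTop (u η)

/-- The Fatou property: for any uniformly bounded sequence of `F₂`-measurable functions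
converging in probability to `η`, `u(η) ≥ limsup u(ξ_n)` a.s. -/
def FatouProp {Ω : Type*} {m2 : MeasurableSpace Ω} (μ : MeasureTheory.Measure Ω)
    (u : (Ω → ℝ) → Ω → ℝ) : Prop :=
  ∀ (ξ : ℕ → Ω → ℝ) (η : Ω → ℝ), (∀ n, Measurable[m2] (ξ n)) → Measurable[m2] η →
    (∃ C : ℝ, ∀ n ω, |ξ n ω| ≤ C) → Bdd η →
    MeasureTheory.TendstoInMeasure μ ξ Filter.atTop η →
    ∀ᵐ ω ∂μ, Filter.limsup (fun n => u (ξ n) ω) Filter.atTop ≤ u η ω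

section Aux

variable {Ω : Type*} {m1 m2 : MeasurableSpace Ω} {μ : @Measure Ω m2}
  {u : (Ω → ℝ) → Ω → ℝ}

lemma stmt11_bdd_add {f g : Ω → ℝ} (hf : Bdd f) (hg : Bdd g) : Bdd (f + g) := by
  obtain ⟨C, hC⟩ := hf; obtain ⟨D, hD⟩ := hg
  exact ⟨C + D, fun ω => (abs_add_le _ _).trans (add_le_add (hC ω) (hD ω))⟩

lemma stmt11_bdd_sub {f g : Ω → ℝ} (hf : Bdd f) (hg : Bdd g) : Bdd (f - g) := by
  obtain ⟨C, hC⟩ := hf; obtain ⟨D, hD⟩ := hg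
  exact ⟨C + D, fun ω => (abs_sub _ _).trans (add_le_add (hC ω) (hD ω))⟩

lemma stmt11_bdd_const (c : ℝ) : Bdd (fun _ : Ω => c) := ⟨|c|, fun _ => le_rfl⟩

lemma stmt11_bdd_ind {s : Set Ω} : Bdd (s.indicator fun _ => (1:ℝ)) := by
  refine ⟨1, fun ω => ?_⟩
  by_cases h : ω ∈ s <;> simp [Set.indicator_apply, h]

/-- a.e. equal inputs give a.e. equal outputs, via the Lebesgue property. -/
lemma stmt11_u_congr (hLeb : LebesgueProp μ u) {ξ η : Ω → ℝ}
    (hξ : Measurable[m2] ξ) (hξb : Bdd ξ) (hη : Measurable[m2] η) (hηb : Bdd η)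
    (hee : ξ =ᵐ[μ] η) : u ξ =ᵐ[μ] u η := by
  obtain ⟨C, hC⟩ := hξb
  have htim : TendstoInMeasure μ (fun _ : ℕ => ξ) Filter.atTop η := by
    rw [tendstoInMeasure_iff_dist]
    intro ε hε
    have hz : ∀ n : ℕ, μ {x | ε ≤ dist (ξ x) (η x)} = 0 := by
      intro n
      refine measure_mono_null (fun x hx => ?_) hee
      simp only [Set.mem_setOf_eq] at hx ⊢
      intro hxx
      rw [hxx] at hx
      simp at hx
      linarith
    have hfz : (fun _ : ℕ => μ {x | ε ≤ dist (ξ x) (η x)}) = fun _ => 0 := funext hz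
    rw [hfz]
    exact tendsto_const_nhds
  have h2 := tendstoInMeasure_iff_dist.1 (hLeb (fun _ => ξ) η (fun _ => hξ) hη ⟨C, fun _ => hC⟩ hηb htim)
  have hz2 : ∀ ε : ℝ, 0 < ε → μ {x | ε ≤ dist (u ξ x) (u η x)} = 0 := by
    intro ε hε
    have := h2 ε hε
    exact tendsto_nhds_unique tendsto_const_nhds this
  have : μ {x | ¬ u ξ x = u η x} = 0 := by
    refine measure_mono_null (fun x hx => ?_)
      (measure_iUnion_null (s := fun k : ℕ => {x | (1:ℝ)/(k+1) ≤ dist (u ξ x) (u η x)})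
        (fun k => hz2 _ (by positivity)))
    simp only [Set.mem_setOf_eq] at hx
    have hd : 0 < dist (u ξ x) (u η x) := dist_pos.2 hx
    obtain ⟨k, hk⟩ := exists_nat_one_div_lt hd
    exact Set.mem_iUnion.2 ⟨k, le_of_lt hk⟩
  exact this

/-- superadditivity -/
lemma stmt11_u_superadd (hu : CondCoherentUtility m1 m2 μ u) {ξ η : Ω → ℝ}
    (hξ : Measurable[m2] ξ) (hξb : Bdd ξ) (hη : Measurable[m2] η) (hηb : Bdd η) :
    ∀ᵐ ω ∂μ, u ξ ω + u η ω ≤ u (ξ + η) ω := by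
  have hcc := hu.concave ξ η (fun _ => (1:ℝ)/2) hξ hξb hη hηb measurable_const
    (fun _ => by constructor <;> norm_num)
  have hph := hu.poshom (ξ + η) (fun _ => (1:ℝ)/2) (hξ.add hη) (stmt11_bdd_add hξb hηb)
    measurable_const (stmt11_bdd_const _) (fun _ => by norm_num)
  have heqf : (fun ω' => ((1:ℝ)/2) * ξ ω' + (1 - (1:ℝ)/2) * η ω')
      = (fun ω' => ((1:ℝ)/2) * (ξ + η) ω') := by
    funext ω'; simp [Pi.add_apply]; ring
  rw [heqf] at hcc
  filter_upwards [hcc, hph] with ω h1 h2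
  rw [h2] at h1
  linarith

/-- monotonicity -/
lemma stmt11_u_mono (hu : CondCoherentUtility m1 m2 μ u) (hLeb : LebesgueProp μ u)
    {ξ η : Ω → ℝ}
    (hξ : Measurable[m2] ξ) (hξb : Bdd ξ) (hη : Measurable[m2] η) (hηb : Bdd η)
    (hle : ∀ ω, ξ ω ≤ η ω) : ∀ᵐ ω ∂μ, u ξ ω ≤ u η ω := by
  have hsub : Measurable[m2] (η - ξ) := hη.sub hξ
  have hsubb : Bdd (η - ξ) := stmt11_bdd_sub hηb hξb
  have hsa := stmt11_u_superadd hu hξ hξb hsub hsubb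
  have hnn := hu.nonneg (η - ξ) hsub hsubb (fun ω => by simp [Pi.sub_apply]; exact hle ω)
  have heq : ξ + (η - ξ) = η := by funext ω; simp [Pi.add_apply, Pi.sub_apply]
  rw [heq] at hsa
  filter_upwards [hsa, hnn] with ω h1 h2
  linarith

/-- locality: if two functions agree on an `m1`-measurable set, their utilities agree a.e.
on that set. -/
lemma stmt11_u_loc (hu : CondCoherentUtility m1 m2 μ u) {A : Set Ω}
    (hA : MeasurableSet[m1] A) {ξ η : Ω → ℝ}
    (hξ : Measurable[m2] ξ) (hξb : Bdd ξ) (hη : Measurable[m2] η) (hηb : Bdd η)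
    (heq : ∀ ω ∈ A, ξ ω = η ω) : ∀ᵐ ω ∂μ, ω ∈ A → u ξ ω = u η ω := by
  set lam : Ω → ℝ := A.indicator (fun _ => 1) with hlam
  have hlam_meas : Measurable[m1] lam := measurable_const.indicator hA
  have hlam_nonneg : ∀ ω, 0 ≤ lam ω := fun ω => by
    by_cases h : ω ∈ A <;> simp [hlam, Set.indicator_apply, h]
  have h1 := hu.poshom ξ lam hξ hξb hlam_meas stmt11_bdd_ind hlam_nonneg
  have h2 := hu.poshom η lam hη hηb hlam_meas stmt11_bdd_ind hlam_nonneg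
  have hfe : (fun ω' => lam ω' * ξ ω') = (fun ω' => lam ω' * η ω') := by
    funext ω'
    by_cases h : ω' ∈ A
    · simp [hlam, Set.indicator_apply, h, heq ω' h]
    · simp [hlam, Set.indicator_apply, h]
  rw [hfe] at h1
  filter_upwards [h1, h2] with ω e1 e2 hωA
  have : lam ω * u ξ ω = lam ω * u η ω := by rw [← e1, e2]
  simpa [hlam, Set.indicator_apply, hωA] using this

end Aux

/-- If `F₂` is atomless conditionally to `F₁`, `U` is uniform on `[0,1]` and independent of
`F₁`, and `u_{1,2}` is a conditional coherent utility with the Fatou and Lebesgue properties,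
then for every `F₁`-measurable `h : Ω → [0,1]` there is an `F₁`-measurable `g : Ω → [0,1]`
with `u_{1,2}(1_{U ≤ g}) = h` almost surely. -/
theorem stmt_11 {Ω : Type*} {m1 m2 : MeasurableSpace Ω} (hm : m1 ≤ m2)
    (μ : @Measure Ω m2) [IsProbabilityMeasure μ]
    (hca : CondAtomless m1 m2 μ)
    (U : Ω → ℝ) (hU : Measurable[m2] U)
    (hUdist : μ.map U = (volume : Measure ℝ).restrict (Set.Icc 0 1))
    (hUindep : ProbabilityTheory.Indep (MeasurableSpace.comap U Real.measurableSpace) m1 μ)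
    (u : (Ω → ℝ) → Ω → ℝ) (hu : CondCoherentUtility m1 m2 μ u)
    (hFatou : FatouProp μ u) (hLeb : LebesgueProp μ u)
    (h : Ω → ℝ) (hhmeas : Measurable[m1] h) (hhrange : ∀ ω, h ω ∈ Set.Icc (0 : ℝ) 1) :
    ∃ g : Ω → ℝ, Measurable[m1] g ∧ (∀ ω, g ω ∈ Set.Icc (0 : ℝ) 1) ∧
      u ({ω | U ω ≤ g ω}.indicator (fun _ => (1 : ℝ))) =ᵐ[μ] h := by
  classical
  -- basic indicator family
  set ind : ℝ → Ω → ℝ := fun c => {ω | U ω ≤ c}.indicator (fun _ => 1) with hind_def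
  have hind_meas : ∀ c, Measurable[m2] (ind c) := fun c =>
    measurable_const.indicator (measurableSet_le hU measurable_const)
  have hind_bdd : ∀ c, Bdd (ind c) := fun _ => stmt11_bdd_ind
  set ψ : ℚ → Ω → ℝ := fun q => u (ind q) with hψ_def
  have hψ_meas : ∀ q, Measurable[m1] (ψ q) := fun q =>
    (hu.measurable_map _ (hind_meas _) (hind_bdd _)).1
  -- facts about the law of U
  have hmap : ∀ s : Set ℝ, MeasurableSet s →
      μ (U ⁻¹' s) = (volume : Measure ℝ).restrict (Set.Icc 0 1) s := by
    intro s hs; rw [← Measure.map_apply hU hs, hUdist]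
  have hgt1 : μ (U ⁻¹' Set.Ioi 1) = 0 := by
    rw [hmap _ measurableSet_Ioi, Measure.restrict_apply measurableSet_Ioi]
    have : Set.Ioi (1:ℝ) ∩ Set.Icc 0 1 = ∅ := by
      ext x; simp only [Set.mem_inter_iff, Set.mem_Ioi, Set.mem_Icc, Set.mem_empty_iff_false,
        iff_false, not_and, and_imp]
      intro h1 h2 h3; linarith
    rw [this]; simp
  have hlt0 : μ (U ⁻¹' Set.Iio 0) = 0 := by
    rw [hmap _ measurableSet_Iio, Measure.restrict_apply measurableSet_Iio]
    have : Set.Iio (0:ℝ) ∩ Set.Icc 0 1 = ∅ := by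
      ext x; simp only [Set.mem_inter_iff, Set.mem_Iio, Set.mem_Icc, Set.mem_empty_iff_false,
        iff_false, not_and, and_imp]
      intro h1 h2 h3; linarith
    rw [this]; simp
  have hIoc : ∀ a b : ℝ, μ (U ⁻¹' Set.Ioc a b) ≤ ENNReal.ofReal (b - a) := by
    intro a b
    rw [hmap _ measurableSet_Ioc, Measure.restrict_apply measurableSet_Ioc]
    refine le_trans (measure_mono Set.inter_subset_left) ?_
    rw [Real.volume_Ioc]
  -- a.e. monotonicity of ψ over rational indices
  have hmono : ∀ᵐ ω ∂μ, ∀ q r : ℚ, q ≤ r → ψ q ω ≤ ψ r ω := by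
    rw [ae_all_iff]; intro q; rw [ae_all_iff]; intro r
    by_cases hqr : q ≤ r
    · have hpt : ∀ ω, ind q ω ≤ ind r ω := by
        intro ω
        by_cases hq' : U ω ≤ (q:ℝ)
        · have hr' : U ω ≤ (r:ℝ) := le_trans hq' (by exact_mod_cast hqr)
          simp [hind_def, Set.indicator_apply, Set.mem_setOf_eq, hq', hr']
        · simp only [hind_def, Set.indicator_apply, Set.mem_setOf_eq, hq', if_false]
          by_cases hr' : U ω ≤ (r:ℝ) <;> simp [hr']
      filter_upwards [stmt11_u_mono hu hLeb (hind_meas q) (hind_bdd q) (hind_meas r)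
        (hind_bdd r) hpt] with ω hω _
      exact hω
    · filter_upwards with ω hcon; exact absurd hcon hqr
  -- u of the constant function 1 is 1
  have huone : u (fun _ => (1:ℝ)) =ᵐ[μ] fun _ => 1 := by
    have ht := hu.transl 0 (fun _ => 1) measurable_zero ⟨0, by simp⟩ measurable_const
      (stmt11_bdd_const 1)
    have h0p : ((0 : Ω → ℝ) + fun _ => (1:ℝ)) = fun _ => (1:ℝ) := by
      funext ω; simp
    rw [h0p] at ht
    filter_upwards [ht, hu.map_zero] with ω e1 e2
    simp only [Pi.add_apply] at e1
    rw [e1, e2]; simp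
  -- ψ q = 1 a.e. for q ≥ 1
  have hone : ∀ᵐ ω ∂μ, ∀ q : ℚ, (1:ℝ) ≤ (q:ℝ) → ψ q ω = 1 := by
    rw [ae_all_iff]; intro q
    by_cases h1q : (1:ℝ) ≤ (q:ℝ)
    · have hae : ind q =ᵐ[μ] fun _ => 1 := by
        rw [Filter.EventuallyEq, ae_iff]
        refine measure_mono_null (fun x hx => ?_) hgt1
        simp only [Set.mem_setOf_eq] at hx
        by_cases hxq : U x ≤ (q:ℝ)
        · exact absurd (by simp [hind_def, Set.indicator_apply, Set.mem_setOf_eq, hxq]) hx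
        · by_contra hcon
          simp only [Set.mem_preimage, Set.mem_Ioi, not_lt] at hcon
          exact hxq (le_trans hcon h1q)
      have := stmt11_u_congr hLeb (hind_meas q) (hind_bdd q) measurable_const
        (stmt11_bdd_const 1) hae
      filter_upwards [this, huone] with ω e1 e2 _
      rw [hψ_def]; simp only []
      rw [e1, e2]
    · filter_upwards with ω hcon; exact absurd hcon h1q
  -- ψ q = 0 a.e. for q < 0
  have hzero : ∀ᵐ ω ∂μ, ∀ q : ℚ, (q:ℝ) < 0 → ψ q ω = 0 := by
    rw [ae_all_iff]; intro q
    by_cases h0q : (q:ℝ) < 0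
    · have hae : ind q =ᵐ[μ] 0 := by
        rw [Filter.EventuallyEq, ae_iff]
        refine measure_mono_null (fun x hx => ?_) hlt0
        simp only [Set.mem_setOf_eq, Pi.zero_apply] at hx
        by_cases hxq : U x ≤ (q:ℝ)
        · exact Set.mem_preimage.2 (Set.mem_Iio.2 (lt_of_le_of_lt hxq h0q))
        · exact absurd (by simp [hind_def, Set.indicator_apply, Set.mem_setOf_eq, hxq]) hx
      have := stmt11_u_congr hLeb (hind_meas q) (hind_bdd q) measurable_zero
        ⟨0, by simp⟩ hae
      filter_upwards [this, hu.map_zero] with ω e1 e2 _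
      rw [hψ_def]; simp only []
      rw [e1, e2]; simp
    · filter_upwards with ω hcon; exact absurd hcon h0q
  -- the candidate function g
  set F : ℚ → Ω → ℝ :=
    fun q ω => if 0 ≤ (q:ℝ) ∧ (q:ℝ) ≤ 1 ∧ h ω ≤ ψ q ω then (q:ℝ) else 1 with hF_def
  have hFap : ∀ q ω, F q ω = if 0 ≤ (q:ℝ) ∧ (q:ℝ) ≤ 1 ∧ h ω ≤ ψ q ω then (q:ℝ) else 1 :=
    fun _ _ => rfl
  have hF_meas : ∀ q, Measurable[m1] (F q) := by
    intro q
    by_cases hq : 0 ≤ (q:ℝ) ∧ (q:ℝ) ≤ 1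
    · have hFq : F q = fun ω => if h ω ≤ ψ q ω then (q:ℝ) else 1 := by
        funext ω
        rw [hFap]
        by_cases hh : h ω ≤ ψ q ω
        · rw [if_pos ⟨hq.1, hq.2, hh⟩, if_pos hh]
        · rw [if_neg (fun hc => hh hc.2.2), if_neg hh]
      rw [hFq]
      exact Measurable.ite (measurableSet_le hhmeas (hψ_meas q)) measurable_const
        measurable_const
    · have hFq : F q = fun _ => (1:ℝ) := by
        funext ω; rw [hFap, if_neg (fun hc => hq ⟨hc.1, hc.2.1⟩)]
      rw [hFq]; exact measurable_const
  have hF01 : ∀ q ω, F q ω ∈ Set.Icc (0:ℝ) 1 := by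
    intro q ω; rw [hFap]
    split
    · next hc => exact ⟨hc.1, hc.2.1⟩
    · exact ⟨zero_le_one, le_rfl⟩
  set g : Ω → ℝ := fun ω => sInf (Set.range fun q => F q ω) with hg_def
  have hrange_ne : ∀ ω, (Set.range fun q => F q ω).Nonempty := fun ω => ⟨F 0 ω, ⟨0, rfl⟩⟩
  have hrange_bdd : ∀ ω, BddBelow (Set.range fun q => F q ω) := fun ω =>
    ⟨0, fun a ⟨q, hq⟩ => hq ▸ (hF01 q ω).1⟩
  have hg01 : ∀ ω, g ω ∈ Set.Icc (0:ℝ) 1 := by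
    intro ω
    constructor
    · exact le_csInf (hrange_ne ω) (fun a ⟨q, hq⟩ => hq ▸ (hF01 q ω).1)
    · exact le_trans (csInf_le (hrange_bdd ω) ⟨0, rfl⟩) (hF01 0 ω).2
  have hg_meas : Measurable[m1] g := by
    refine Measurable.isGLB hF_meas (fun ω => ?_)
    have hset : {a | ∃ q : ℚ, F q ω = a} = Set.range fun q => F q ω := by
      ext a; simp [Set.mem_setOf_eq, Set.mem_range]
    rw [hset]
    exact isGLB_csInf (hrange_ne ω) (hrange_bdd ω)
  -- key properties of g
  have hupper : ∀ᵐ ω ∂μ, ∀ q : ℚ, g ω < (q:ℝ) → h ω ≤ ψ q ω := by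
    filter_upwards [hmono, hone] with ω hm1 ho1
    intro q hq
    obtain ⟨a, ⟨r, hr⟩, har⟩ := exists_lt_of_csInf_lt (hrange_ne ω) hq
    have hr' : F r ω = a := hr
    rw [← hr'] at har
    by_cases hc : 0 ≤ (r:ℝ) ∧ (r:ℝ) ≤ 1 ∧ h ω ≤ ψ r ω
    · rw [hFap, if_pos hc] at har
      have hrq : r ≤ q := by exact_mod_cast har.le
      exact le_trans hc.2.2 (hm1 r q hrq)
    · rw [hFap, if_neg hc] at har
      rw [ho1 q har.le]
      exact (hhrange ω).2
  have hlower : ∀ᵐ ω ∂μ, ∀ q : ℚ, (q:ℝ) < g ω → ψ q ω ≤ h ω := by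
    filter_upwards [hzero] with ω hz1
    intro q hq
    have hFq : g ω ≤ F q ω := csInf_le (hrange_bdd ω) ⟨q, rfl⟩
    by_cases hc : 0 ≤ (q:ℝ) ∧ (q:ℝ) ≤ 1 ∧ h ω ≤ ψ q ω
    · exfalso
      rw [hFap, if_pos hc] at hFq
      exact absurd hq (not_lt.2 hFq)
    · push_neg at hc
      by_cases h0 : 0 ≤ (q:ℝ)
      · have h1 : (q:ℝ) ≤ 1 := le_trans hq.le (hg01 ω).2
        exact (hc h0 h1).le
      · push_neg at h0
        rw [hz1 q h0]
        exact (hhrange ω).1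
  -- dyadic upper and lower approximations of g
  set rU : ℕ → Ω → ℝ := fun n ω => ((⌊g ω * 2 ^ n⌋ : ℤ) + 1) / 2 ^ n with hrU_def
  set rL : ℕ → Ω → ℝ := fun n ω => ((⌈g ω * 2 ^ n⌉ : ℤ) - 1) / 2 ^ n with hrL_def
  have h2pos : ∀ n : ℕ, (0:ℝ) < 2 ^ n := fun n => by positivity
  have hrU_meas : ∀ n, Measurable[m1] (rU n) := by
    intro n
    have h1 : Measurable[m1] fun ω => g ω * 2 ^ n := hg_meas.mul_const _
    have h2 : Measurable[m1] fun ω => (⌊g ω * 2 ^ n⌋ : ℤ) := Int.measurable_floor.comp h1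
    have h3 : Measurable[m1] fun ω => ((⌊g ω * 2 ^ n⌋ : ℤ) : ℝ) := measurable_from_top.comp h2
    have h4 : Measurable[m1] fun ω => (((⌊g ω * 2 ^ n⌋ : ℤ) : ℝ) + 1) := h3.add_const 1
    exact h4.div_const _
  have hrL_meas : ∀ n, Measurable[m1] (rL n) := by
    intro n
    have h1 : Measurable[m1] fun ω => g ω * 2 ^ n := hg_meas.mul_const _
    have h2 : Measurable[m1] fun ω => (⌈g ω * 2 ^ n⌉ : ℤ) := Int.measurable_ceil.comp h1
    have h3 : Measurable[m1] fun ω => ((⌈g ω * 2 ^ n⌉ : ℤ) : ℝ) := measurable_from_top.comp h2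
    have h4 : Measurable[m1] fun ω => (((⌈g ω * 2 ^ n⌉ : ℤ) : ℝ) - 1) := h3.sub_const 1
    exact h4.div_const _
  have hrU_gt : ∀ n ω, g ω < rU n ω := by
    intro n ω
    rw [hrU_def]
    rw [lt_div_iff₀ (h2pos n)]
    exact Int.lt_floor_add_one _
  have hrU_le : ∀ n ω, rU n ω ≤ g ω + ((2:ℝ) ^ n)⁻¹ := by
    intro n ω
    rw [hrU_def]
    rw [div_le_iff₀ (h2pos n)]
    have h1 : ((⌊g ω * 2 ^ n⌋ : ℤ) : ℝ) ≤ g ω * 2 ^ n := Int.floor_le _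
    have h2 : ((2:ℝ) ^ n)⁻¹ * 2 ^ n = 1 := inv_mul_cancel₀ (h2pos n).ne'
    nlinarith [h2pos n]
  have hrL_lt : ∀ n ω, rL n ω < g ω := by
    intro n ω
    rw [hrL_def]
    rw [div_lt_iff₀ (h2pos n)]
    have := Int.ceil_lt_add_one (g ω * 2 ^ n)
    push_cast
    linarith
  have hrL_ge : ∀ n ω, g ω ≤ rL n ω + ((2:ℝ) ^ n)⁻¹ := by
    intro n ω
    have h1 : g ω * 2 ^ n ≤ ((⌈g ω * 2 ^ n⌉ : ℤ) : ℝ) := Int.le_ceil _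
    have h2 : ((2:ℝ) ^ n)⁻¹ * 2 ^ n = 1 := inv_mul_cancel₀ (h2pos n).ne'
    have key : g ω - ((2:ℝ) ^ n)⁻¹ ≤ (((⌈g ω * 2 ^ n⌉ : ℤ) : ℝ) - 1) / 2 ^ n := by
      rw [le_div_iff₀ (h2pos n)]
      nlinarith [h2pos n]
    rw [hrL_def]
    linarith [key]
  have hrU_rat : ∀ n ω, ∃ q : ℚ, rU n ω = (q:ℝ) := by
    intro n ω
    refine ⟨((⌊g ω * 2 ^ n⌋ : ℤ) + 1) / 2 ^ n, ?_⟩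
    rw [hrU_def]
    push_cast
    ring
  have hrL_rat : ∀ n ω, ∃ q : ℚ, rL n ω = (q:ℝ) := by
    intro n ω
    refine ⟨((⌈g ω * 2 ^ n⌉ : ℤ) - 1) / 2 ^ n, ?_⟩
    rw [hrL_def]
    push_cast
    ring
  -- the indicator processes
  set ζ : Ω → ℝ := {ω | U ω ≤ g ω}.indicator (fun _ => 1) with hζ_def
  have hζ_meas : Measurable[m2] ζ :=
    measurable_const.indicator (measurableSet_le hU (hg_meas.mono hm le_rfl))
  set ζU : ℕ → Ω → ℝ := fun n => {ω | U ω ≤ rU n ω}.indicator (fun _ => 1) with hζU_def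
  set ζL : ℕ → Ω → ℝ := fun n => {ω | U ω ≤ rL n ω}.indicator (fun _ => 1) with hζL_def
  have hζU_meas : ∀ n, Measurable[m2] (ζU n) := fun n =>
    measurable_const.indicator (measurableSet_le hU ((hrU_meas n).mono hm le_rfl))
  have hζL_meas : ∀ n, Measurable[m2] (ζL n) := fun n =>
    measurable_const.indicator (measurableSet_le hU ((hrL_meas n).mono hm le_rfl))
  -- locality: on the set where the approximant equals a rational value q, the utility is ψ q
  have hlocU : ∀ᵐ ω ∂μ, ∀ (n : ℕ) (q : ℚ), rU n ω = (q:ℝ) → u (ζU n) ω = ψ q ω := by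
    rw [ae_all_iff]; intro n; rw [ae_all_iff]; intro q
    have hA : MeasurableSet[m1] (rU n ⁻¹' {(q:ℝ)}) := (hrU_meas n) (measurableSet_singleton _)
    have hagree : ∀ ω ∈ rU n ⁻¹' {(q:ℝ)}, ζU n ω = ind q ω := by
      intro ω hω
      have hωq : rU n ω = (q:ℝ) := hω
      rw [hζU_def, hind_def]
      simp only [Set.indicator_apply, Set.mem_setOf_eq, hωq]
    have := stmt11_u_loc hu hA (hζU_meas n) stmt11_bdd_ind (hind_meas q) (hind_bdd q) hagree
    filter_upwards [this] with ω hω hωq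
    exact hω hωq
  have hlocL : ∀ᵐ ω ∂μ, ∀ (n : ℕ) (q : ℚ), rL n ω = (q:ℝ) → u (ζL n) ω = ψ q ω := by
    rw [ae_all_iff]; intro n; rw [ae_all_iff]; intro q
    have hA : MeasurableSet[m1] (rL n ⁻¹' {(q:ℝ)}) := (hrL_meas n) (measurableSet_singleton _)
    have hagree : ∀ ω ∈ rL n ⁻¹' {(q:ℝ)}, ζL n ω = ind q ω := by
      intro ω hω
      have hωq : rL n ω = (q:ℝ) := hω
      rw [hζL_def, hind_def]
      simp only [Set.indicator_apply, Set.mem_setOf_eq, hωq]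
    have := stmt11_u_loc hu hA (hζL_meas n) stmt11_bdd_ind (hind_meas q) (hind_bdd q) hagree
    filter_upwards [this] with ω hω hωq
    exact hω hωq
  -- a.e. inequalities for the approximating utilities
  have hUineq : ∀ᵐ ω ∂μ, ∀ n, h ω ≤ u (ζU n) ω := by
    filter_upwards [hlocU, hupper] with ω h1 h2
    intro n
    obtain ⟨q, hq⟩ := hrU_rat n ω
    rw [h1 n q hq]
    exact h2 q (hq ▸ hrU_gt n ω)
  have hLineq : ∀ᵐ ω ∂μ, ∀ n, u (ζL n) ω ≤ h ω := by
    filter_upwards [hlocL, hlower] with ω h1 h2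
    intro n
    obtain ⟨q, hq⟩ := hrL_rat n ω
    rw [h1 n q hq]
    exact h2 q (hq ▸ hrL_lt n ω)
  -- independence bound
  have hbound : ∀ (r : Ω → ℝ), Measurable[m1] r → (∀ ω, ∃ q : ℚ, r ω = (q:ℝ)) →
      ∀ (I : ℚ → Set ℝ), (∀ q, MeasurableSet (I q)) →
      ∀ ε : ENNReal, (∀ q, μ (U ⁻¹' I q) ≤ ε) →
      μ (⋃ q : ℚ, (U ⁻¹' I q ∩ r ⁻¹' {(q:ℝ)})) ≤ ε := by
    intro r hr hrrat I hI ε hε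
    have hindep := (ProbabilityTheory.Indep_iff _ _ μ).1 hUindep
    have hprod : ∀ q : ℚ, μ (U ⁻¹' I q ∩ r ⁻¹' {(q:ℝ)})
        = μ (U ⁻¹' I q) * μ (r ⁻¹' {(q:ℝ)}) := fun q =>
      hindep _ _ ⟨I q, hI q, rfl⟩ (hr (measurableSet_singleton _))
    have hdisj : Pairwise (Function.onFun Disjoint fun q : ℚ => r ⁻¹' {(q:ℝ)}) := by
      intro q q' hqq'
      refine Set.disjoint_left.2 fun ω hq hq' => hqq' ?_
      have : (q:ℝ) = (q':ℝ) := by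
        rw [← Set.mem_singleton_iff.1 hq, ← Set.mem_singleton_iff.1 hq']
      exact_mod_cast this
    calc μ (⋃ q : ℚ, (U ⁻¹' I q ∩ r ⁻¹' {(q:ℝ)}))
        ≤ ∑' q : ℚ, μ (U ⁻¹' I q ∩ r ⁻¹' {(q:ℝ)}) := measure_iUnion_le _
      _ ≤ ∑' q : ℚ, ε * μ (r ⁻¹' {(q:ℝ)}) := by
          refine ENNReal.tsum_le_tsum fun q => ?_
          rw [hprod q]
          gcongr; exact hε q
      _ = ε * ∑' q : ℚ, μ (r ⁻¹' {(q:ℝ)}) := ENNReal.tsum_mul_left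
      _ = ε * μ (⋃ q : ℚ, r ⁻¹' {(q:ℝ)}) := by
          rw [measure_iUnion hdisj (fun q => hm _ (hr (measurableSet_singleton _)))]
      _ ≤ ε * 1 := by gcongr; exact prob_le_one
      _ = ε := mul_one ε
  -- measure of difference sets
  have hne_subU : ∀ n, {x | ζU n x ≠ ζ x} ⊆
      ⋃ q : ℚ, (U ⁻¹' Set.Ioc ((q:ℝ) - ((2:ℝ) ^ n)⁻¹) (q:ℝ) ∩ rU n ⁻¹' {(q:ℝ)}) := by
    intro n x hx
    simp only [Set.mem_setOf_eq] at hx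
    obtain ⟨q, hq⟩ := hrU_rat n x
    by_cases h1 : U x ≤ g x
    · exfalso
      have h2 : U x ≤ rU n x := le_trans h1 (hrU_gt n x).le
      rw [hζU_def, hζ_def] at hx
      simp [Set.indicator_apply, Set.mem_setOf_eq, h1, h2] at hx
    · by_cases h2 : U x ≤ rU n x
      · refine Set.mem_iUnion.2 ⟨q, ⟨?_, hq⟩⟩
        simp only [Set.mem_preimage, Set.mem_Ioc]
        constructor
        · push_neg at h1
          have := hrU_le n x
          rw [hq] at this
          linarith
        · rw [← hq]; exact h2
      · exfalso
        rw [hζU_def, hζ_def] at hx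
        simp [Set.indicator_apply, Set.mem_setOf_eq, h1, h2] at hx
  have hne_subL : ∀ n, {x | ζL n x ≠ ζ x} ⊆
      ⋃ q : ℚ, (U ⁻¹' Set.Ioc (q:ℝ) ((q:ℝ) + ((2:ℝ) ^ n)⁻¹) ∩ rL n ⁻¹' {(q:ℝ)}) := by
    intro n x hx
    simp only [Set.mem_setOf_eq] at hx
    obtain ⟨q, hq⟩ := hrL_rat n x
    by_cases h1 : U x ≤ rL n x
    · exfalso
      have h2 : U x ≤ g x := le_trans h1 (hrL_lt n x).le
      rw [hζL_def, hζ_def] at hx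
      simp [Set.indicator_apply, Set.mem_setOf_eq, h1, h2] at hx
    · by_cases h2 : U x ≤ g x
      · refine Set.mem_iUnion.2 ⟨q, ⟨?_, hq⟩⟩
        simp only [Set.mem_preimage, Set.mem_Ioc]
        constructor
        · push_neg at h1
          rw [← hq]; exact h1
        · have := hrL_ge n x
          rw [hq] at this
          linarith
      · exfalso
        rw [hζL_def, hζ_def] at hx
        simp [Set.indicator_apply, Set.mem_setOf_eq, h1, h2] at hx
  have hμU : ∀ n, μ {x | ζU n x ≠ ζ x} ≤ ENNReal.ofReal (((2:ℝ) ^ n)⁻¹) := by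
    intro n
    refine le_trans (measure_mono (hne_subU n)) ?_
    refine hbound (rU n) (hrU_meas n) (hrU_rat n) _ (fun q => measurableSet_Ioc) _
      (fun q => ?_)
    refine le_trans (hIoc _ _) ?_
    have : (q:ℝ) - ((q:ℝ) - ((2:ℝ) ^ n)⁻¹) = ((2:ℝ) ^ n)⁻¹ := by ring
    rw [this]
  have hμL : ∀ n, μ {x | ζL n x ≠ ζ x} ≤ ENNReal.ofReal (((2:ℝ) ^ n)⁻¹) := by
    intro n
    refine le_trans (measure_mono (hne_subL n)) ?_
    refine hbound (rL n) (hrL_meas n) (hrL_rat n) _ (fun q => measurableSet_Ioc) _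
      (fun q => ?_)
    refine le_trans (hIoc _ _) ?_
    have : (q:ℝ) + ((2:ℝ) ^ n)⁻¹ - (q:ℝ) = ((2:ℝ) ^ n)⁻¹ := by ring
    rw [this]
  -- convergence in measure
  have h0lim : Filter.Tendsto (fun n : ℕ => ENNReal.ofReal (((2:ℝ) ^ n)⁻¹))
      Filter.atTop (nhds 0) := by
    rw [← ENNReal.ofReal_zero]
    refine (ENNReal.continuous_ofReal.tendsto 0).comp ?_
    have : (fun n : ℕ => ((2:ℝ) ^ n)⁻¹) = fun n : ℕ => ((2:ℝ)⁻¹) ^ n := by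
      funext n; rw [inv_pow]
    rw [this]
    exact tendsto_pow_atTop_nhds_zero_of_lt_one (by norm_num) (by norm_num)
  have htim : ∀ (ξ : ℕ → Ω → ℝ), (∀ n, μ {x | ξ n x ≠ ζ x} ≤ ENNReal.ofReal (((2:ℝ) ^ n)⁻¹)) →
      TendstoInMeasure μ ξ Filter.atTop ζ := by
    intro ξ hξμ
    rw [tendstoInMeasure_iff_dist]
    intro ε hε
    have hle : ∀ n, μ {x | ε ≤ dist (ξ n x) (ζ x)} ≤ ENNReal.ofReal (((2:ℝ) ^ n)⁻¹) := by
      intro n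
      refine le_trans (measure_mono fun x hx => ?_) (hξμ n)
      simp only [Set.mem_setOf_eq] at hx ⊢
      intro hcontra
      rw [hcontra] at hx
      simp only [dist_self] at hx
      linarith
    exact tendsto_of_tendsto_of_tendsto_of_le_of_le tendsto_const_nhds h0lim
      (fun n => zero_le) hle
  have hbd1 : ∀ (s : ℕ → Set Ω), ∃ C : ℝ, ∀ (n : ℕ) (ω : Ω),
      |(s n).indicator (fun _ => (1:ℝ)) ω| ≤ C := by
    intro s
    refine ⟨1, fun n ω => ?_⟩
    by_cases hh : ω ∈ s n <;> simp [Set.indicator_apply, hh]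
  -- apply the Lebesgue property and pass to a.e. subsequential limits
  have hconvU := hLeb ζU ζ hζU_meas hζ_meas (by rw [hζU_def]; exact hbd1 _) stmt11_bdd_ind
    (htim ζU hμU)
  have hconvL := hLeb ζL ζ hζL_meas hζ_meas (by rw [hζL_def]; exact hbd1 _) stmt11_bdd_ind
    (htim ζL hμL)
  obtain ⟨nsU, _, haeU⟩ := hconvU.exists_seq_tendsto_ae
  obtain ⟨nsL, _, haeL⟩ := hconvL.exists_seq_tendsto_ae
  have hge : ∀ᵐ ω ∂μ, h ω ≤ u ζ ω := by
    filter_upwards [haeU, hUineq] with ω htend hineq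
    exact ge_of_tendsto htend (Filter.Eventually.of_forall fun i => hineq (nsU i))
  have hle : ∀ᵐ ω ∂μ, u ζ ω ≤ h ω := by
    filter_upwards [haeL, hLineq] with ω htend hineq
    exact le_of_tendsto htend (Filter.Eventually.of_forall fun i => hineq (nsL i))
  refine ⟨g, hg_meas, hg01, ?_⟩
  rw [← hζ_def]
  filter_upwards [hge, hle] with ω e1 e2
  exact le_antisymm e2 e1
end

section
/- Suppose F₂ is atomless conditionally to F₁ and let u_{1,2} : L^∞(F₂) → L^∞(F₁) be a conditional coherent utility function that is Lebesgue continuous. Then for any two bounded F₁-measurable random variables f, g there exist two comonotone random variables ξ, η ∈ L^∞(F₂) such that u_{1,2}(ξ) = f, u_{1,2}(η) = g, u_{1,2}(ξ + η) = f + g, and moreover ‖ξ‖_∞ ≤ 3 max(‖f‖_∞, ‖g‖_∞) and ‖η‖_∞ ≤ 3 max(‖f‖_∞, ‖g‖_∞). -/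
open MeasureTheory

/-- Two real random variables are comonotone if
`(ξ ω − ξ ω') * (η ω − η ω') ≥ 0` for all `ω, ω'`. -/
def Comonotone' {Ω : Type*} (ξ η : Ω → ℝ) : Prop :=
  ∀ ω ω', 0 ≤ (ξ ω - ξ ω') * (η ω - η ω')

set_option linter.unusedSectionVars false
set_option linter.unusedVariables false
set_option maxHeartbeats 1000000

open scoped ENNReal

namespace Stmt12Aux

variable {Ω : Type*} {m1 m2 : MeasurableSpace Ω}

/-- real indicator of a set -/
noncomputable def indF (X : Set Ω) : Ω → ℝ := X.indicator (fun _ => (1 : ℝ))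

lemma indF_meas {X : Set Ω} (hX : MeasurableSet[m2] X) : Measurable[m2] (indF X) :=
  (measurable_const (a := (1:ℝ))).indicator hX

lemma indF_bdd (X : Set Ω) : Bdd (indF X) := by
  refine ⟨1, fun ω => ?_⟩
  by_cases h : ω ∈ X <;> simp [indF, Set.indicator_apply, h]

lemma indF_nonneg (X : Set Ω) (ω : Ω) : 0 ≤ indF X ω :=
  Set.indicator_nonneg (fun _ _ => zero_le_one) ω

lemma indF_le_one (X : Set Ω) (ω : Ω) : indF X ω ≤ 1 := by
  by_cases h : ω ∈ X <;> simp [indF, Set.indicator_apply, h]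

section U

variable (μ : @Measure Ω m2) [IsProbabilityMeasure μ]
variable {u : (Ω → ℝ) → Ω → ℝ}


lemma u_poshom' (hu : CondCoherentUtility m1 m2 μ u) (ξ lam : Ω → ℝ) (hξ : Measurable[m2] ξ) (hξb : Bdd ξ)
    (hlam : Measurable[m1] lam) (hlamb : Bdd lam) (h0 : ∀ ω, 0 ≤ lam ω) :
    u (fun ω => lam ω * ξ ω) =ᵐ[μ] fun ω => lam ω * u ξ ω :=
  hu.poshom ξ lam hξ hξb hlam hlamb h0

lemma u_poshom_const (hu : CondCoherentUtility m1 m2 μ u) (ξ : Ω → ℝ) (c : ℝ) (hc : 0 ≤ c) (hξ : Measurable[m2] ξ) (hξb : Bdd ξ) :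
    u (fun ω => c * ξ ω) =ᵐ[μ] fun ω => c * u ξ ω :=
  hu.poshom ξ (fun _ => c) hξ hξb measurable_const ⟨|c|, fun _ => le_refl _⟩ (fun _ => hc)

lemma u_translate (hu : CondCoherentUtility m1 m2 μ u) (ξ a : Ω → ℝ) (hξ : Measurable[m2] ξ) (hξb : Bdd ξ)
    (ha : Measurable[m1] a) (hab : Bdd a) :
    u (fun ω => ξ ω + a ω) =ᵐ[μ] fun ω => u ξ ω + a ω :=
  hu.transl ξ a hξ hξb ha hab

lemma u_superadd (hu : CondCoherentUtility m1 m2 μ u) (a b : Ω → ℝ) (ha : Measurable[m2] a) (hab : Bdd a)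
    (hb : Measurable[m2] b) (hbb : Bdd b) :
    (fun ω => u a ω + u b ω) ≤ᵐ[μ] u (fun ω => a ω + b ω) := by
  obtain ⟨Ca, hCa⟩ := hab
  obtain ⟨Cb, hCb⟩ := hbb
  have h2a : Bdd (fun ω => 2 * a ω) := ⟨2 * Ca, fun ω => by rw [abs_mul]; simp [abs_two]; nlinarith [hCa ω, abs_nonneg (a ω)]⟩
  have h2b : Bdd (fun ω => 2 * b ω) := ⟨2 * Cb, fun ω => by rw [abs_mul]; simp [abs_two]; nlinarith [hCb ω, abs_nonneg (b ω)]⟩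
  have hc := hu.concave (fun ω => 2 * a ω) (fun ω => 2 * b ω) (fun _ => (1:ℝ)/2)
    (ha.const_mul 2) h2a (hb.const_mul 2) h2b measurable_const
    (fun ω => ⟨by norm_num, by norm_num⟩)
  have harg : (fun ω' => (1:ℝ)/2 * (2 * a ω') + (1 - 1/2) * (2 * b ω')) = fun ω => a ω + b ω := by
    funext ω; ring
  rw [harg] at hc
  have hpa := u_poshom_const μ hu a 2 (by norm_num) ha ⟨Ca, hCa⟩
  have hpb := u_poshom_const μ hu b 2 (by norm_num) hb ⟨Cb, hCb⟩
  filter_upwards [hc, hpa, hpb] with ω hc hpa hpb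
  rw [hpa, hpb] at hc
  calc u a ω + u b ω = 1/2 * (2 * u a ω) + (1 - 1/2) * (2 * u b ω) := by ring
  _ ≤ _ := hc

lemma u_mono (hu : CondCoherentUtility m1 m2 μ u) (a b : Ω → ℝ) (ha : Measurable[m2] a) (hab : Bdd a)
    (hb : Measurable[m2] b) (hbb : Bdd b) (h : ∀ ω, a ω ≤ b ω) :
    u a ≤ᵐ[μ] u b := by
  obtain ⟨Ca, hCa⟩ := hab
  obtain ⟨Cb, hCb⟩ := hbb
  have hdm : Measurable[m2] (fun ω => b ω - a ω) := hb.sub ha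
  have hdb : Bdd (fun ω => b ω - a ω) := ⟨Cb + Ca, fun ω => by
    have := abs_sub (b ω) (a ω); have := hCa ω; have := hCb ω
    have : |b ω - a ω| ≤ |b ω| + |a ω| := abs_sub _ _
    linarith⟩
  have hs := u_superadd μ hu a (fun ω => b ω - a ω) ha ⟨Ca, hCa⟩ hdm hdb
  have hnn := hu.nonneg (fun ω => b ω - a ω) hdm hdb (fun ω => by simpa using h ω)
  have harg : u (fun ω => a ω + (fun ω => b ω - a ω) ω) = u b := by
    apply congrArg u; funext ω
    show a ω + (b ω - a ω) = b ω
    ring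
  rw [harg] at hs
  filter_upwards [hs, hnn] with ω hs hnn
  have h2 : u a ω + u (fun ω => b ω - a ω) ω ≤ u b ω := hs
  have h3 : (0:ℝ) ≤ u (fun ω => b ω - a ω) ω := hnn
  linarith

lemma u_const (hu : CondCoherentUtility m1 m2 μ u) (c : ℝ) : u (fun _ => c) =ᵐ[μ] fun _ => c := by
  have h := hu.transl 0 (fun _ => c) measurable_const ⟨0, by simp [Pi.zero_apply]⟩
    measurable_const ⟨|c|, fun _ => le_refl _⟩
  have harg : (0 : Ω → ℝ) + (fun _ => c) = fun _ => c := by funext ω; simp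
  rw [harg] at h
  filter_upwards [h, hu.map_zero] with ω h h0
  rw [h]
  simp only [Pi.add_apply]
  rw [h0]
  simp

/-- locality: if two functions agree on an `m1`-set, their utilities agree a.e. there. -/
lemma u_eq_on (hu : CondCoherentUtility m1 m2 μ u) {C : Set Ω} (hC : MeasurableSet[m1] C) (ξ ζ : Ω → ℝ)
    (hξ : Measurable[m2] ξ) (hξb : Bdd ξ) (hζ : Measurable[m2] ζ) (hζb : Bdd ζ)
    (h : ∀ ω ∈ C, ξ ω = ζ ω) :
    ∀ᵐ ω ∂μ, ω ∈ C → u ξ ω = u ζ ω := by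
  have hCm : Measurable[m1] (indF C) := (measurable_const (a := (1:ℝ))).indicator hC
  have h1 := u_poshom' μ hu ξ (indF C) hξ hξb hCm (indF_bdd C) (indF_nonneg C)
  have h2 := u_poshom' μ hu ζ (indF C) hζ hζb hCm (indF_bdd C) (indF_nonneg C)
  have harg : (fun ω => indF C ω * ξ ω) = (fun ω => indF C ω * ζ ω) := by
    funext ω
    by_cases hω : ω ∈ C
    · rw [h ω hω]
    · simp [indF, Set.indicator_apply, hω]
  rw [harg] at h1
  filter_upwards [h1, h2] with ω h1 h2 hω
  have hind : indF C ω = 1 := by simp [indF, Set.indicator_apply, hω]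
  have := h1.symm.trans h2
  rw [hind] at this
  simpa using this

lemma u_affine (hu : CondCoherentUtility m1 m2 μ u) (ξ : Ω → ℝ) (hξ : Measurable[m2] ξ) (hξb : Bdd ξ)
    (c : ℝ) (hc : 0 ≤ c) (β : Ω → ℝ) (hβ : Measurable[m1] β) (hβb : Bdd β) :
    u (fun ω => c * ξ ω + β ω) =ᵐ[μ] fun ω => c * u ξ ω + β ω := by
  obtain ⟨Cξ, hCξ⟩ := hξb
  have hcm : Measurable[m2] (fun ω => c * ξ ω) := hξ.const_mul c
  have hcb : Bdd (fun ω => c * ξ ω) := ⟨|c| * Cξ, fun ω => by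
    rw [abs_mul]
    exact mul_le_mul_of_nonneg_left (hCξ ω) (abs_nonneg c)⟩
  have h1 := u_translate μ hu (fun ω => c * ξ ω) β hcm hcb hβ hβb
  have h2 := u_poshom_const μ hu ξ c hc hξ ⟨Cξ, hCξ⟩
  filter_upwards [h1, h2] with ω h1 h2
  rw [h1, h2]

end U



variable {Ω : Type*} {m1 m2 : MeasurableSpace Ω}

/-- conditional probability of a set, as used in `CondAtomless`. -/
noncomputable def ci (m1 : MeasurableSpace Ω) (μ : @Measure Ω m2) (X : Set Ω) : Ω → ℝ :=
  μ[X.indicator (fun _ => (1 : ℝ)) | m1]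

variable (μ : @Measure Ω m2) [IsProbabilityMeasure μ]

lemma intInd {X : Set Ω} (hX : MeasurableSet[m2] X) :
    Integrable (X.indicator (fun _ => (1 : ℝ))) μ :=
  (integrable_const 1).indicator hX

lemma ci_sm (X : Set Ω) : StronglyMeasurable[m1] (ci m1 μ X) := stronglyMeasurable_condExp

lemma ci_meas (X : Set Ω) : Measurable[m1] (ci m1 μ X) := (ci_sm μ X).measurable

lemma ci_nonneg {X : Set Ω} : 0 ≤ᵐ[μ] ci m1 μ X :=
  condExp_nonneg (Filter.Eventually.of_forall fun ω => Set.indicator_nonneg (fun _ _ => zero_le_one) ω)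

lemma dummy_placeholder : True := trivial

lemma ci_empty : ci m1 μ (∅ : Set Ω) =ᵐ[μ] 0 := by
  have h : (∅ : Set Ω).indicator (fun _ => (1:ℝ)) = (0 : Ω → ℝ) := by funext ω; simp
  rw [ci, h, condExp_zero]

lemma ci_univ (hm : m1 ≤ m2) : ci m1 μ (Set.univ : Set Ω) =ᵐ[μ] fun _ => 1 := by
  have : (Set.univ : Set Ω).indicator (fun _ => (1:ℝ)) = fun _ => 1 := by simp
  rw [ci, this, condExp_const hm]

lemma ci_mono {X Y : Set Ω} (hX : MeasurableSet[m2] X) (hY : MeasurableSet[m2] Y)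
    (hXY : X ⊆ Y) : ci m1 μ X ≤ᵐ[μ] ci m1 μ Y :=
  condExp_mono (intInd μ hX) (intInd μ hY)
    (Filter.Eventually.of_forall fun ω => Set.indicator_le_indicator_of_subset hXY (fun _ => zero_le_one) ω)

lemma ci_le_one (hm : m1 ≤ m2) {X : Set Ω} (hX : MeasurableSet[m2] X) :
    ci m1 μ X ≤ᵐ[μ] fun _ => 1 :=
  (ci_mono μ hX MeasurableSet.univ (Set.subset_univ X)).trans (ci_univ μ hm).le

lemma ci_union {X Y : Set Ω} (hX : MeasurableSet[m2] X) (hY : MeasurableSet[m2] Y)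
    (hd : Disjoint X Y) : ci m1 μ (X ∪ Y) =ᵐ[μ] ci m1 μ X + ci m1 μ Y := by
  have h1 : (X ∪ Y).indicator (fun _ => (1:ℝ)) =
      X.indicator (fun _ => (1:ℝ)) + Y.indicator (fun _ => (1:ℝ)) := by
    rw [Set.indicator_union_of_disjoint hd]; rfl
  rw [ci, h1]
  exact (condExp_add (intInd μ hX) (intInd μ hY) m1)

lemma ci_diff {X Y : Set Ω} (hX : MeasurableSet[m2] X) (hY : MeasurableSet[m2] Y)
    (hXY : X ⊆ Y) : ci m1 μ (Y \ X) =ᵐ[μ] fun ω => ci m1 μ Y ω - ci m1 μ X ω := by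
  have hd : Disjoint X (Y \ X) := Set.disjoint_sdiff_right.mono_left le_rfl
  have hu : X ∪ (Y \ X) = Y := Set.union_diff_cancel hXY
  have h2 := ci_union (m1 := m1) μ hX (hY.diff hX) hd
  rw [hu] at h2
  filter_upwards [h2] with ω h2
  have : ci m1 μ Y ω = ci m1 μ X ω + ci m1 μ (Y \ X) ω := h2
  linarith

lemma ci_inter_m1 (hm : m1 ≤ m2) {X C : Set Ω} (hX : MeasurableSet[m2] X)
    (hC : MeasurableSet[m1] C) :
    ci m1 μ (X ∩ C) =ᵐ[μ] fun ω => C.indicator (ci m1 μ X) ω := by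
  have h1 : (X ∩ C).indicator (fun _ => (1:ℝ)) = C.indicator (X.indicator (fun _ => (1:ℝ))) := by
    ext ω; by_cases h : ω ∈ C <;> by_cases h' : ω ∈ X <;>
      simp [Set.indicator_apply, h, h', Set.mem_inter_iff]
  rw [ci, h1]
  exact condExp_indicator (intInd μ hX) hC

lemma ci_integral (hm : m1 ≤ m2) {X : Set Ω} (hX : MeasurableSet[m2] X) :
    ∫ ω, ci m1 μ X ω ∂μ = (μ X).toReal := by
  rw [ci, integral_condExp hm, integral_indicator_const (1:ℝ) hX]
  simp
  rfl

lemma ci_integrable (X : Set Ω) : Integrable (ci m1 μ X) μ := integrable_condExp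



section Halving

variable (μ : @Measure Ω m2) [IsProbabilityMeasure μ]

lemma exists_half_le (hm : m1 ≤ m2) (hca : CondAtomless m1 m2 μ) (X : Set Ω) (hX : MeasurableSet[m2] X) :
    ∃ Y, MeasurableSet[m2] Y ∧ Y ⊆ X ∧
      ∀ᵐ ω ∂μ, 0 < ci m1 μ X ω → (0 < ci m1 μ Y ω ∧ 2 * ci m1 μ Y ω ≤ ci m1 μ X ω) := by
  obtain ⟨B, hB, hBX, hae⟩ := hca X hX
  have hae' : ∀ᵐ ω ∂μ, 0 < ci m1 μ X ω → 0 < ci m1 μ B ω ∧ ci m1 μ B ω < ci m1 μ X ω := hae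
  set G : Set Ω := {ω | 2 * ci m1 μ B ω ≤ ci m1 μ X ω} with hGdef
  have hG : MeasurableSet[m1] G := by
    exact measurableSet_le ((ci_meas μ B).const_mul 2) (ci_meas μ X)
  refine ⟨(B ∩ G) ∪ ((X \ B) ∩ Gᶜ), (hB.inter (hm _ hG)).union ((hX.diff hB).inter (hm _ hG.compl)),
    ?_, ?_⟩
  · rintro ω (⟨h1, _⟩ | ⟨h1, _⟩)
    · exact hBX h1
    · exact h1.1
  · have hd : Disjoint (B ∩ G) ((X \ B) ∩ Gᶜ) :=
      (Set.disjoint_sdiff_right (s := B) (t := X)).mono Set.inter_subset_left Set.inter_subset_left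
    have e1 := ci_union (m1 := m1) μ (hB.inter (hm _ hG)) ((hX.diff hB).inter (hm _ hG.compl)) hd
    have e2 := ci_inter_m1 μ hm hB hG
    have e3 := ci_inter_m1 μ hm (hX.diff hB) hG.compl
    have e4 := ci_diff (m1 := m1) μ hB hX hBX
    filter_upwards [hae', e1, e2, e3, e4] with ω hae e1 e2 e3 e4 hpos
    obtain ⟨hb0, hbX⟩ := hae hpos
    have eY : ci m1 μ ((B ∩ G) ∪ ((X \ B) ∩ Gᶜ)) ω
        = G.indicator (ci m1 μ B) ω + Gᶜ.indicator (ci m1 μ (X \ B)) ω := by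
      rw [e1]; simp only [Pi.add_apply]; rw [e2, e3]
    by_cases hωG : ω ∈ G
    · have : ci m1 μ ((B ∩ G) ∪ ((X \ B) ∩ Gᶜ)) ω = ci m1 μ B ω := by
        rw [eY, Set.indicator_of_mem hωG, Set.indicator_of_notMem (by simp [hωG]) _, add_zero]
      rw [this]
      exact ⟨hb0, hωG⟩
    · have : ci m1 μ ((B ∩ G) ∪ ((X \ B) ∩ Gᶜ)) ω = ci m1 μ X ω - ci m1 μ B ω := by
        rw [eY, Set.indicator_of_notMem hωG, Set.indicator_of_mem (by simp [hωG]), zero_add, e4]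
      rw [this]
      have hnG : ¬ (2 * ci m1 μ B ω ≤ ci m1 μ X ω) := hωG
      constructor <;> linarith
  
lemma exists_small (hm : m1 ≤ m2) (hca : CondAtomless m1 m2 μ) (n : ℕ) (X : Set Ω) (hX : MeasurableSet[m2] X) :
    ∃ Y, MeasurableSet[m2] Y ∧ Y ⊆ X ∧
      ∀ᵐ ω ∂μ, 0 < ci m1 μ X ω →
        (0 < ci m1 μ Y ω ∧ 2 ^ n * ci m1 μ Y ω ≤ ci m1 μ X ω) := by
  induction n with
  | zero =>
    exact ⟨X, hX, subset_rfl, Filter.Eventually.of_forall fun ω h => ⟨h, by simpa using le_refl _⟩⟩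
  | succ n ih =>
    obtain ⟨Y, hY, hYX, hae⟩ := ih
    obtain ⟨Z, hZ, hZY, hae2⟩ := exists_half_le μ hm hca Y hY
    refine ⟨Z, hZ, hZY.trans hYX, ?_⟩
    filter_upwards [hae, hae2] with ω h1 h2 hpos
    obtain ⟨hY0, hYle⟩ := h1 hpos
    obtain ⟨hZ0, hZle⟩ := h2 hY0
    refine ⟨hZ0, ?_⟩
    have : (2:ℝ) ^ (n+1) * ci m1 μ Z ω = 2 ^ n * (2 * ci m1 μ Z ω) := by ring
    rw [this]
    calc (2:ℝ) ^ n * (2 * ci m1 μ Z ω) ≤ 2 ^ n * ci m1 μ Y ω := by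
          apply mul_le_mul_of_nonneg_left hZle (by positivity)
    _ ≤ ci m1 μ X ω := hYle

end Halving


section ExactHalf

variable (μ : @Measure Ω m2) [IsProbabilityMeasure μ]

lemma exists_half (hm : m1 ≤ m2) (hca : CondAtomless m1 m2 μ) (X : Set Ω)
    (hX : MeasurableSet[m2] X) :
    ∃ B, MeasurableSet[m2] B ∧ B ⊆ X ∧
      ci m1 μ B =ᵐ[μ] fun ω => ci m1 μ X ω / 2 := by
  classical
  set Good : Set Ω → Prop := fun B => MeasurableSet[m2] B ∧ B ⊆ X ∧
    (∀ᵐ ω ∂μ, ci m1 μ B ω ≤ ci m1 μ X ω / 2) with hGoodDef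
  set Cand : Set Ω → Set (Set Ω) := fun B => {C | MeasurableSet[m2] C ∧ C ⊆ X \ B ∧
    (∀ᵐ ω ∂μ, ci m1 μ B ω + ci m1 μ C ω ≤ ci m1 μ X ω / 2)} with hCandDef
  -- the supremum of candidate measures is at most 1
  have hsuple : ∀ B, sSup (μ '' Cand B) ≤ 1 := by
    intro B
    apply sSup_le
    rintro y ⟨C, _, rfl⟩
    exact le_trans (measure_mono (Set.subset_univ C)) (le_of_eq measure_univ)
  have hempty_mem : ∀ B, Good B → ∅ ∈ Cand B := by
    intro B hB
    refine ⟨MeasurableSet.empty, Set.empty_subset _, ?_⟩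
    filter_upwards [hB.2.2, ci_empty (m1 := m1) μ] with ω h1 h2
    have : ci m1 μ (∅ : Set Ω) ω = 0 := h2
    rw [this, add_zero]
    exact h1
  have hstep : ∀ B, Good B → ∃ C, C ∈ Cand B ∧ sSup (μ '' Cand B) ≤ 2 * μ C := by
    intro B hB
    by_cases h0 : sSup (μ '' Cand B) = 0
    · exact ⟨∅, hempty_mem B hB, by rw [h0]; exact zero_le⟩
    · have hnetop : sSup (μ '' Cand B) ≠ ⊤ := by
        exact ne_top_of_le_ne_top ENNReal.one_ne_top (hsuple B)
      have hlt : sSup (μ '' Cand B) / 2 < sSup (μ '' Cand B) :=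
        ENNReal.half_lt_self h0 hnetop
      obtain ⟨y, hy, hlt2⟩ := lt_sSup_iff.mp hlt
      obtain ⟨C, hC, rfl⟩ := hy
      refine ⟨C, hC, ?_⟩
      have h2 : sSup (μ '' Cand B) / 2 * 2 ≤ μ C * 2 :=
        mul_le_mul_left hlt2.le 2
      rw [ENNReal.div_mul_cancel (by norm_num) (by norm_num)] at h2
      rw [mul_comm] at h2
      exact h2
  choose stepC hstep1 hstep2 using hstep
  have good_empty : Good ∅ := by
    refine ⟨MeasurableSet.empty, Set.empty_subset _, ?_⟩
    filter_upwards [ci_empty (m1 := m1) μ, ci_nonneg (m1 := m1) μ (X := X)] with ω h1 h2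
    have : ci m1 μ (∅ : Set Ω) ω = 0 := h1
    rw [this]
    have h2' : (0:ℝ) ≤ ci m1 μ X ω := h2
    linarith
  have good_step : ∀ B (hB : Good B), Good (B ∪ stepC B hB) := by
    intro B hB
    obtain ⟨hCmeas, hCsub, hCae⟩ := hstep1 B hB
    have hdisj : Disjoint B (stepC B hB) := by
      refine Set.disjoint_left.mpr fun ω hω1 hω2 => ?_
      exact (hCsub hω2).2 hω1
    refine ⟨hB.1.union hCmeas, Set.union_subset hB.2.1 (hCsub.trans Set.diff_subset), ?_⟩
    filter_upwards [ci_union (m1 := m1) μ hB.1 hCmeas hdisj, hCae] with ω h1 h2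
    rw [h1]
    exact h2
  let seq : ℕ → {B : Set Ω // Good B} := fun n =>
    Nat.rec ⟨∅, good_empty⟩ (fun _ p => ⟨p.1 ∪ stepC p.1 p.2, good_step p.1 p.2⟩) n
  have hseq_succ : ∀ n, (seq (n+1)).1 = (seq n).1 ∪ stepC (seq n).1 (seq n).2 := fun n => rfl
  set Bn : ℕ → Set Ω := fun n => (seq n).1 with hBnDef
  set Cn : ℕ → Set Ω := fun n => stepC (Bn n) (seq n).2 with hCnDef
  have hBn_mono : Monotone Bn := by
    apply monotone_nat_of_le_succ
    intro n
    exact le_trans (le_of_eq rfl) (Set.subset_union_left (s := (seq n).1) (t := stepC (seq n).1 (seq n).2))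
  have hBn_meas : ∀ n, MeasurableSet[m2] (Bn n) := fun n => (seq n).2.1
  have hBn_sub : ∀ n, Bn n ⊆ X := fun n => (seq n).2.2.1
  have hBn_half : ∀ n, ∀ᵐ ω ∂μ, ci m1 μ (Bn n) ω ≤ ci m1 μ X ω / 2 := fun n => (seq n).2.2.2
  have hCn_mem : ∀ n, Cn n ∈ Cand (Bn n) := fun n => hstep1 (Bn n) (seq n).2
  have hCn_sup : ∀ n, sSup (μ '' Cand (Bn n)) ≤ 2 * μ (Cn n) := fun n => hstep2 (Bn n) (seq n).2
  set B' : Set Ω := ⋃ n, Bn n with hB'Def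
  have hB'_meas : MeasurableSet[m2] B' := MeasurableSet.iUnion hBn_meas
  have hB'_sub : B' ⊆ X := Set.iUnion_subset hBn_sub
  have hBn_le_B' : ∀ n, Bn n ⊆ B' := fun n => Set.subset_iUnion Bn n
  -- the limit function
  set L : Ω → ℝ := fun ω => ⨆ n, ci m1 μ (Bn n) ω with hLDef
  have hLmeas : Measurable[m1] L := Measurable.iSup (fun n => ci_meas μ (Bn n))
  have hae_mono : ∀ᵐ ω ∂μ, Monotone (fun n => ci m1 μ (Bn n) ω) := by
    have h : ∀ᵐ ω ∂μ, ∀ n : ℕ, ci m1 μ (Bn n) ω ≤ ci m1 μ (Bn (n+1)) ω := by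
      rw [ae_all_iff]
      intro n
      exact ci_mono μ (hBn_meas n) (hBn_meas (n+1)) (hBn_mono (Nat.le_succ n))
    filter_upwards [h] with ω h
    exact monotone_nat_of_le_succ h
  have hae_leB' : ∀ᵐ ω ∂μ, ∀ n : ℕ, ci m1 μ (Bn n) ω ≤ ci m1 μ B' ω := by
    rw [ae_all_iff]
    intro n
    exact ci_mono μ (hBn_meas n) hB'_meas (hBn_le_B' n)
  have hae_nonneg : ∀ᵐ ω ∂μ, ∀ n : ℕ, 0 ≤ ci m1 μ (Bn n) ω := by
    rw [ae_all_iff]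
    intro n
    exact ci_nonneg μ
  -- pointwise convergence to L a.e.
  have hae_tendsto : ∀ᵐ ω ∂μ, Filter.Tendsto (fun n => ci m1 μ (Bn n) ω) Filter.atTop (nhds (L ω)) := by
    filter_upwards [hae_mono, hae_leB'] with ω hmono hle
    exact tendsto_atTop_ciSup hmono ⟨ci m1 μ B' ω, fun y ⟨n, hn⟩ => hn ▸ hle n⟩
  have hae_L_le : ∀ᵐ ω ∂μ, L ω ≤ ci m1 μ B' ω := by
    filter_upwards [hae_leB'] with ω hle
    exact ciSup_le fun n => hle n
  have hae_L_half : ∀ᵐ ω ∂μ, L ω ≤ ci m1 μ X ω / 2 := by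
    have h : ∀ᵐ ω ∂μ, ∀ n : ℕ, ci m1 μ (Bn n) ω ≤ ci m1 μ X ω / 2 := ae_all_iff.mpr hBn_half
    filter_upwards [h] with ω h
    exact ciSup_le h
  have hL_int : Integrable L μ := by
    refine Integrable.mono' (integrable_const (1:ℝ)) ?_ ?_
    · exact ((hLmeas.mono hm le_rfl).stronglyMeasurable).aestronglyMeasurable
    · filter_upwards [hae_nonneg, ae_all_iff.mpr (fun n => ci_le_one μ hm (hBn_meas n))] with ω h0 h1
      rw [Real.norm_eq_abs, abs_le]
      constructor
      · have := h0 0; have h2 : ci m1 μ (Bn 0) ω ≤ L ω := le_ciSup ⟨(1:ℝ), fun y ⟨n, hn⟩ => hn ▸ h1 n⟩ 0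
        linarith
      · exact ciSup_le fun n => h1 n
  -- integrals converge
  have hint_tendsto : Filter.Tendsto (fun n => ∫ ω, ci m1 μ (Bn n) ω ∂μ) Filter.atTop
      (nhds (∫ ω, L ω ∂μ)) :=
    integral_tendsto_of_tendsto_of_monotone (fun n => ci_integrable μ (Bn n)) hL_int hae_mono hae_tendsto
  have hmeas_tendsto : Filter.Tendsto (fun n => ∫ ω, ci m1 μ (Bn n) ω ∂μ) Filter.atTop
      (nhds ((μ B').toReal)) := by
    have h1 : Filter.Tendsto (fun n => μ (Bn n)) Filter.atTop (nhds (μ B')) := by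
      have := MeasureTheory.tendsto_measure_iUnion_atTop (μ := μ) hBn_mono
      exact this
    have h2 := (ENNReal.tendsto_toReal (measure_ne_top μ B')).comp h1
    have h3 : ∀ n, ∫ ω, ci m1 μ (Bn n) ω ∂μ = (μ (Bn n)).toReal := fun n =>
      ci_integral μ hm (hBn_meas n)
    exact Filter.Tendsto.congr (fun n => (h3 n).symm) h2
  have hintL : ∫ ω, L ω ∂μ = (μ B').toReal := tendsto_nhds_unique hint_tendsto hmeas_tendsto
  have hL_eq : ci m1 μ B' =ᵐ[μ] L := by
    have hdiff_nonneg : 0 ≤ᵐ[μ] fun ω => ci m1 μ B' ω - L ω := by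
      filter_upwards [hae_L_le] with ω h
      simp [sub_nonneg, h]
    have hdiff_int : Integrable (fun ω => ci m1 μ B' ω - L ω) μ :=
      (ci_integrable μ B').sub hL_int
    have hdiff_zero : ∫ ω, (ci m1 μ B' ω - L ω) ∂μ = 0 := by
      rw [integral_sub (ci_integrable μ B') hL_int, hintL, ci_integral μ hm hB'_meas, sub_self]
    have := (integral_eq_zero_iff_of_nonneg_ae hdiff_nonneg hdiff_int).mp hdiff_zero
    filter_upwards [this] with ω h
    have h' : ci m1 μ B' ω - L ω = 0 := h
    linarith
  have hB'_half : ∀ᵐ ω ∂μ, ci m1 μ B' ω ≤ ci m1 μ X ω / 2 := by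
    filter_upwards [hL_eq, hae_L_half] with ω h1 h2
    rw [h1]; exact h2
  -- Main claim : equality a.e.
  refine ⟨B', hB'_meas, hB'_sub, ?_⟩
  set D : Set Ω := {ω | ci m1 μ B' ω < ci m1 μ X ω / 2} with hDDef
  have hD_meas : MeasurableSet[m1] D :=
    measurableSet_lt (ci_meas μ B') ((ci_meas μ X).div_const 2)
  by_cases hD0 : μ D = 0
  · -- done : a.e. both inequalities
    have h1 : ∀ᵐ ω ∂μ, ω ∉ D := by
      rw [ae_iff]
      simpa using hD0
    filter_upwards [h1, hB'_half] with ω h1 h2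
    have : ¬ (ci m1 μ B' ω < ci m1 μ X ω / 2) := h1
    linarith
  · -- contradiction
    exfalso
    choose Yn hYn_meas hYn_sub hYn_ae using fun n => exists_small μ hm hca n (X \ B') (hX.diff hB'_meas)
    have hXB'_ci := ci_diff (m1 := m1) μ hB'_meas hX hB'_sub
    set G : ℕ → Set Ω := fun n =>
      D ∩ {ω | ci m1 μ (Yn n) ω ≤ ci m1 μ X ω / 2 - ci m1 μ B' ω} with hGDef
    have hG_meas : ∀ n, MeasurableSet[m1] (G n) := fun n =>
      hD_meas.inter (measurableSet_le (ci_meas μ (Yn n))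
        ((ci_meas μ X).div_const 2 |>.sub (ci_meas μ B')))
    -- a.e. facts on D
    have hDpos : ∀ᵐ ω ∂μ, ω ∈ D → 0 < ci m1 μ (X \ B') ω := by
      filter_upwards [hXB'_ci, ci_nonneg (m1 := m1) μ (X := X)] with ω h1 h2 hωD
      have hD' : ci m1 μ B' ω < ci m1 μ X ω / 2 := hωD
      rw [h1]
      have h2' : (0:ℝ) ≤ ci m1 μ X ω := h2
      linarith
    have hDsub : ∀ᵐ ω ∂μ, ω ∈ D → ω ∈ ⋃ n, G n := by
      have hY_all : ∀ᵐ ω ∂μ, ∀ n, 0 < ci m1 μ (X \ B') ω →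
          (0 < ci m1 μ (Yn n) ω ∧ 2 ^ n * ci m1 μ (Yn n) ω ≤ ci m1 μ (X \ B') ω) :=
        ae_all_iff.mpr hYn_ae
      filter_upwards [hDpos, hY_all, hXB'_ci, ci_le_one μ hm (hX.diff hB'_meas)]
        with ω hpos hY h1 hle1 hωD
      have hp := hpos hωD
      have hD' : ci m1 μ B' ω < ci m1 μ X ω / 2 := hωD
      set δ := ci m1 μ X ω / 2 - ci m1 μ B' ω with hδ
      have hδpos : 0 < δ := by simp only [hδ]; linarith
      obtain ⟨n, hn⟩ := exists_pow_lt_of_lt_one hδpos (by norm_num : (1:ℝ)/2 < 1)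
      have hYb := hY n hp
      have h2 : ci m1 μ (Yn n) ω ≤ (1/2) ^ n := by
        have hle1' : ci m1 μ (X \ B') ω ≤ 1 := hle1
        have := hYb.2
        rw [div_pow, one_pow]
        rw [le_div_iff₀ (by positivity)]
        nlinarith [hYb.1]
      refine Set.mem_iUnion.mpr ⟨n, hωD, ?_⟩
      have : ci m1 μ (Yn n) ω ≤ δ := le_of_lt (lt_of_le_of_lt h2 hn)
      simpa [hδ] using this
    have hexn : ∃ n0, μ (G n0) ≠ 0 := by
      by_contra hall
      push_neg at hall
      have hUn : μ (⋃ n, G n) = 0 := measure_iUnion_null hall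
      have h1 : ∀ᵐ ω ∂μ, ω ∉ ⋃ n, G n := measure_eq_zero_iff_ae_notMem.mp hUn
      have h2 : ∀ᵐ ω ∂μ, ω ∉ D := by
        filter_upwards [h1, hDsub] with ω h1 h2 
        intro hωD
        exact h1 (h2 hωD)
      apply hD0
      rw [← measure_eq_zero_iff_ae_notMem] at h2  
      exact h2
    obtain ⟨n0, hn0⟩ := hexn
    set Cstar : Set Ω := Yn n0 ∩ G n0 with hCstarDef
    have hCstar_meas : MeasurableSet[m2] Cstar := (hYn_meas n0).inter (hm _ (hG_meas n0))
    have hciCstar := ci_inter_m1 μ hm (hYn_meas n0) (hG_meas n0)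
    have hkey : ∀ᵐ ω ∂μ, ci m1 μ B' ω + ci m1 μ Cstar ω ≤ ci m1 μ X ω / 2 := by
      filter_upwards [hciCstar, hB'_half] with ω h1 h2
      rw [h1]
      by_cases hωG : ω ∈ G n0
      · rw [Set.indicator_of_mem hωG]
        have := hωG.2
        simp only [Set.mem_setOf_eq] at this
        linarith
      · rw [Set.indicator_of_notMem hωG]
        linarith
    have hCstar_pos : μ Cstar ≠ 0 := by
      intro hzero
      apply hn0
      have hnm : ∀ᵐ ω ∂μ, ω ∉ Cstar := by
        rw [← measure_eq_zero_iff_ae_notMem]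
        exact hzero
      have hind0 : (Cstar.indicator (fun _ => (1:ℝ))) =ᵐ[μ] 0 := by
        filter_upwards [hnm] with ω h
        simp [Set.indicator_of_notMem h]
      have hci0 : ci m1 μ Cstar =ᵐ[μ] 0 := by
        have := condExp_congr_ae (m := m1) hind0
        rw [ci]
        refine this.trans ?_
        rw [condExp_zero]
      have hGpos : ∀ᵐ ω ∂μ, ω ∈ G n0 → 0 < ci m1 μ (Yn n0) ω := by
        filter_upwards [hDpos, hYn_ae n0] with ω h1 h2 hωG
        exact (h2 (h1 hωG.1)).1
      rw [measure_eq_zero_iff_ae_notMem]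
      filter_upwards [hGpos, hciCstar, hci0] with ω h1 h2 h3
      intro hω
      have hp := h1 hω
      have he : ci m1 μ Cstar ω = ci m1 μ (Yn n0) ω := by
        rw [h2, Set.indicator_of_mem hω]
      have hz : ci m1 μ Cstar ω = 0 := h3
      linarith [he ▸ hz]
    have hCand : ∀ n, Cstar ∈ Cand (Bn n) := by
      intro n
      have hciBn_le : ci m1 μ (Bn n) ≤ᵐ[μ] ci m1 μ B' :=
        ci_mono μ (hBn_meas n) hB'_meas (hBn_le_B' n)
      refine ⟨hCstar_meas, ?_, ?_⟩
      · intro ω hω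
        have h1 : ω ∈ X \ B' := hYn_sub n0 hω.1
        exact ⟨h1.1, fun hBn => h1.2 (hBn_le_B' n hBn)⟩
      · filter_upwards [hkey, hciBn_le] with ω h1 h2
        have h2' : ci m1 μ (Bn n) ω ≤ ci m1 μ B' ω := h2
        linarith
    have hle2 : ∀ n, μ Cstar ≤ 2 * μ (Cn n) := fun n =>
      le_trans (le_sSup (Set.mem_image_of_mem μ (hCand n))) (hCn_sup n)
    have hCn_sub_Bn1 : ∀ n, Cn n ⊆ Bn (n+1) := by
      intro n ω hω
      have h : Bn (n+1) = Bn n ∪ Cn n := hseq_succ n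
      rw [h]
      exact Or.inr hω
    have hCn_disj_Bn : ∀ n, Disjoint (Bn n) (Cn n) := by
      intro n
      have h := (hCn_mem n).2.1
      exact Set.disjoint_left.mpr fun ω h1 h2 => (h h2).2 h1
    have hdisj : ∀ {i j : ℕ}, i < j → Disjoint (Cn i) (Cn j) := by
      intro i j hij
      have h1 : Cn i ⊆ Bn j := (hCn_sub_Bn1 i).trans (hBn_mono hij)
      exact ((hCn_disj_Bn j).mono_left h1)
    have hsum : ∀ N : ℕ, (N : ℝ≥0∞) * (μ Cstar / 2) ≤ 1 := by
      intro N
      have hPD : (Finset.range N : Set ℕ).PairwiseDisjoint Cn := by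
        intro i hi j hj hij
        rcases lt_or_gt_of_ne hij with h|h
        · exact hdisj h
        · exact (hdisj h).symm
      have hUeq : μ (⋃ i ∈ Finset.range N, Cn i) = ∑ i ∈ Finset.range N, μ (Cn i) :=
        measure_biUnion_finset hPD (fun i _ => (hCn_mem i).1)
      have hsum_le : (∑ i ∈ Finset.range N, μ (Cn i)) ≤ 1 := by
        rw [← hUeq]
        exact le_trans (measure_mono (Set.subset_univ _)) measure_univ.le
      have hterm : ∀ i ∈ Finset.range N, μ Cstar / 2 ≤ μ (Cn i) := by
        intro i _
        rw [ENNReal.div_le_iff_le_mul (Or.inl (by norm_num)) (Or.inl (by norm_num)), mul_comm]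
        exact hle2 i
      calc (N:ℝ≥0∞) * (μ Cstar / 2) = (Finset.range N).card • (μ Cstar / 2) := by
            rw [Finset.card_range, nsmul_eq_mul]
      _ ≤ ∑ i ∈ Finset.range N, μ (Cn i) := Finset.card_nsmul_le_sum _ _ _ hterm
      _ ≤ 1 := hsum_le
    set x := μ Cstar / 2 with hx
    have hx0 : x ≠ 0 := by
      rw [hx]
      simp [ENNReal.div_eq_zero_iff, hCstar_pos]
    have hub : ∀ N : ℕ, (N:ℝ≥0∞) ≤ 1 / x := fun N =>
      (ENNReal.le_div_iff_mul_le (Or.inl hx0) (Or.inr ENNReal.one_ne_top)).mpr (hsum N)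
    have hdivtop : (1:ℝ≥0∞) / x ≠ ⊤ := by
      rw [Ne, ENNReal.div_eq_top]
      push_neg
      refine ⟨fun _ => hx0, fun h => absurd h ENNReal.one_ne_top⟩
    obtain ⟨N, hN⟩ := ENNReal.exists_nat_gt hdivtop
    exact absurd (hub N) (not_le.mpr hN)

end ExactHalf


section Dyadic

variable (hm : m1 ≤ m2) (μ : @Measure Ω m2) [IsProbabilityMeasure μ]
  (hca : CondAtomless m1 m2 μ)

open Classical in
/-- a measurable subset with half the conditional measure -/
noncomputable def halfSet (X : Set Ω) : Set Ω :=
  if hX : MeasurableSet[m2] X then (exists_half μ hm hca X hX).choose else ∅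

lemma halfSet_meas (X : Set Ω) : MeasurableSet[m2] (halfSet hm μ hca X) := by
  rw [halfSet]
  split
  · exact (exists_half μ hm hca X (by assumption)).choose_spec.1
  · exact MeasurableSet.empty

lemma halfSet_subset (X : Set Ω) : halfSet hm μ hca X ⊆ X := by
  rw [halfSet]
  split
  · exact (exists_half μ hm hca X (by assumption)).choose_spec.2.1
  · exact Set.empty_subset X

lemma halfSet_ci {X : Set Ω} (hX : MeasurableSet[m2] X) :
    ci m1 μ (halfSet hm μ hca X) =ᵐ[μ] fun ω => ci m1 μ X ω / 2 := by
  rw [halfSet, dif_pos hX]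
  exact (exists_half μ hm hca X hX).choose_spec.2.2

/-- the dyadic family of sets : `dy n k` corresponds to level `k / 2^n`. -/
noncomputable def dy : ℕ → ℕ → Set Ω := fun n =>
  Nat.rec (motive := fun _ => ℕ → Set Ω)
    (fun k => if k = 0 then (∅ : Set Ω) else Set.univ)
    (fun _ prev k => if k % 2 = 0 then prev (k / 2)
      else prev (k / 2) ∪ halfSet hm μ hca (prev (k / 2 + 1) \ prev (k / 2)))
    n

lemma dy_zero_def (k : ℕ) : dy hm μ hca 0 k = if k = 0 then (∅ : Set Ω) else Set.univ := rfl

lemma dy_succ_def (n k : ℕ) : dy hm μ hca (n+1) k =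
    if k % 2 = 0 then dy hm μ hca n (k / 2)
    else dy hm μ hca n (k / 2) ∪
      halfSet hm μ hca (dy hm μ hca n (k / 2 + 1) \ dy hm μ hca n (k / 2)) := rfl

lemma dy_meas : ∀ n k, MeasurableSet[m2] (dy hm μ hca n k) := by
  intro n
  induction n with
  | zero =>
    intro k
    rw [dy_zero_def]
    split
    · exact MeasurableSet.empty
    · exact MeasurableSet.univ
  | succ n ih =>
    intro k
    rw [dy_succ_def]
    split
    · exact ih _
    · exact (ih _).union (halfSet_meas hm μ hca _)

lemma dy_zero_eq : ∀ n, dy hm μ hca n 0 = ∅ := by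
  intro n
  induction n with
  | zero => simp [dy_zero_def]
  | succ n ih => rw [dy_succ_def]; simp [ih]

lemma dy_top : ∀ n k, 2 ^ n ≤ k → dy hm μ hca n k = Set.univ := by
  intro n
  induction n with
  | zero =>
    intro k hk
    rw [dy_zero_def]
    have : k ≠ 0 := by omega
    simp [this]
  | succ n ih =>
    intro k hk
    rw [dy_succ_def]
    have h2 : 2 ^ n ≤ k / 2 := by omega
    split
    · exact ih _ h2
    · rw [ih _ h2]; simp

lemma dy_even (n k : ℕ) : dy hm μ hca (n+1) (2*k) = dy hm μ hca n k := by
  rw [dy_succ_def]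
  have h1 : (2*k) % 2 = 0 := by omega
  have h2 : (2*k) / 2 = k := by omega
  simp [h1, h2]

lemma dy_odd (n k : ℕ) : dy hm μ hca (n+1) (2*k+1) =
    dy hm μ hca n k ∪ halfSet hm μ hca (dy hm μ hca n (k+1) \ dy hm μ hca n k) := by
  rw [dy_succ_def]
  have h1 : (2*k+1) % 2 ≠ 0 := by omega
  have h2 : (2*k+1) / 2 = k := by omega
  simp [h1, h2]

lemma dy_mono_succ : ∀ n k, dy hm μ hca n k ⊆ dy hm μ hca n (k+1) := by
  intro n
  induction n with
  | zero =>
    intro k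
    rw [dy_zero_def, dy_zero_def]
    have : k + 1 ≠ 0 := by omega
    split
    · simp [this]
    · simp [this]
  | succ n ih =>
    intro k
    rcases Nat.even_or_odd k with ⟨j, hj⟩ | ⟨j, hj⟩
    · subst hj
      rw [show j + j = 2*j by ring, dy_even, dy_odd]
      exact Set.subset_union_left
    · subst hj
      rw [dy_odd, show 2*j+1+1 = 2*(j+1) by ring, dy_even]
      apply Set.union_subset (ih j)
      exact (halfSet_subset hm μ hca _).trans (Set.diff_subset.trans subset_rfl)

lemma dy_mono : ∀ n k l, k ≤ l → dy hm μ hca n k ⊆ dy hm μ hca n l := by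
  intro n k l hkl
  induction l with
  | zero => rw [Nat.le_zero.mp hkl]
  | succ l ih =>
    rcases Nat.lt_or_ge k (l+1) with h | h
    · exact (ih (by omega)).trans (dy_mono_succ hm μ hca n l)
    · rw [show k = l + 1 by omega]

lemma dy_lift : ∀ p n k, dy hm μ hca (n+p) (k * 2^p) = dy hm μ hca n k := by
  intro p
  induction p with
  | zero => intro n k; simp
  | succ p ih =>
    intro n k
    have h1 : k * 2 ^ (p+1) = 2 * (k * 2 ^ p) := by ring
    have h2 : n + (p+1) = (n + p) + 1 := by ring
    rw [h1, h2, dy_even, ih]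

lemma dy_cross {m n j k : ℕ} (h : j * 2 ^ n ≤ k * 2 ^ m) :
    dy hm μ hca m j ⊆ dy hm μ hca n k := by
  have h1 : dy hm μ hca m j = dy hm μ hca (m+n) (j * 2^n) := (dy_lift hm μ hca n m j).symm
  have h2 : dy hm μ hca n k = dy hm μ hca (n+m) (k * 2^m) := (dy_lift hm μ hca m n k).symm
  rw [h1, h2, show n + m = m + n by ring]
  exact dy_mono hm μ hca (m+n) _ _ h

lemma dy_ci : ∀ n k, k ≤ 2 ^ n →
    ci m1 μ (dy hm μ hca n k) =ᵐ[μ] fun _ => (k:ℝ) / 2 ^ n := by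
  intro n
  induction n with
  | zero =>
    intro k hk
    interval_cases k
    · rw [dy_zero_eq]
      refine (ci_empty (m1 := m1) μ).trans ?_
      norm_num
      try rfl
    · rw [dy_zero_def]
      norm_num
      refine (ci_univ μ hm).trans ?_
      norm_num
      try rfl
  | succ n ih =>
    intro k hk
    rcases Nat.even_or_odd k with ⟨j, hj⟩ | ⟨j, hj⟩
    · subst hj
      rw [show j + j = 2*j by ring, dy_even]
      have hj2 : j ≤ 2 ^ n := by
        have : 2 ^ (n+1) = 2 * 2 ^ n := by ring
        omega
      refine (ih j hj2).trans ?_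
      apply Filter.EventuallyEq.of_eq
      funext ω
      have : (2:ℝ) ^ (n+1) = 2 * 2 ^ n := by ring
      rw [this]
      push_cast
      field_simp
    · subst hj
      rw [dy_odd]
      have hj1 : j + 1 ≤ 2 ^ n := by
        have : 2 ^ (n+1) = 2 * 2 ^ n := by ring
        omega
      have hjle : j ≤ 2 ^ n := by omega
      have hsub : dy hm μ hca n j ⊆ dy hm μ hca n (j+1) := dy_mono hm μ hca n j (j+1) (by omega)
      have hdiff_meas : MeasurableSet[m2] (dy hm μ hca n (j+1) \ dy hm μ hca n j) :=
        (dy_meas hm μ hca n (j+1)).diff (dy_meas hm μ hca n j)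
      have hdisj : Disjoint (dy hm μ hca n j)
          (halfSet hm μ hca (dy hm μ hca n (j+1) \ dy hm μ hca n j)) := by
        refine Set.disjoint_left.mpr fun ω h1 h2 => ?_
        exact (halfSet_subset hm μ hca _ h2).2 h1
      have e1 := ci_union (m1 := m1) μ (dy_meas hm μ hca n j)
        (halfSet_meas hm μ hca _) hdisj
      have e2 := halfSet_ci hm μ hca hdiff_meas
      have e3 := ci_diff (m1 := m1) μ (dy_meas hm μ hca n j) (dy_meas hm μ hca n (j+1)) hsub
      have e4 := ih j hjle
      have e5 := ih (j+1) hj1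
      filter_upwards [e1, e2, e3, e4, e5] with ω e1 e2 e3 e4 e5
      have he1 : ci m1 μ (dy hm μ hca n j ∪
          halfSet hm μ hca (dy hm μ hca n (j+1) \ dy hm μ hca n j)) ω
          = ci m1 μ (dy hm μ hca n j) ω
            + ci m1 μ (halfSet hm μ hca (dy hm μ hca n (j+1) \ dy hm μ hca n j)) ω := e1
      rw [he1, e2, e3, e4, e5]
      have h2n : (0:ℝ) < 2 ^ n := by positivity
      have : (2:ℝ) ^ (n+1) = 2 * 2 ^ n := by ring
      rw [this]
      push_cast
      field_simp
      ring

end Dyadic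


section Cover

lemma cover_I (n : ℕ) (t : ℝ) (ht0 : 0 ≤ t) (ht1 : t ≤ 1) :
    ∃ k : ℕ, 1 ≤ k ∧ k ≤ 2^n ∧ ((k:ℝ)-1)/2^n ≤ t ∧ (k < 2^n → t < (k:ℝ)/2^n) := by
  have h2n : (0:ℝ) < 2^n := by positivity
  by_cases hbig : 2^n ≤ Nat.floor (t * 2^n) + 1
  · refine ⟨2^n, Nat.one_le_two_pow, le_refl _, ?_, fun h => absurd h (lt_irrefl _)⟩
    have h1 : (2^n - 1 : ℕ) ≤ Nat.floor (t * 2^n) := by omega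
    have h2 : ((2^n - 1 : ℕ) : ℝ) ≤ t * 2^n :=
      le_trans (Nat.cast_le.mpr h1) (Nat.floor_le (by positivity))
    have h3 : ((2^n : ℕ) : ℝ) - 1 ≤ t * 2^n := by
      have : ((2^n - 1 : ℕ) : ℝ) = ((2^n : ℕ) : ℝ) - 1 := by
        have : (1:ℕ) ≤ 2^n := Nat.one_le_two_pow
        push_cast [Nat.cast_sub this]
        ring
      linarith [this ▸ h2]
    rw [div_le_iff₀ h2n]
    push_cast
    push_cast at h3
    linarith
  · push_neg at hbig
    refine ⟨Nat.floor (t * 2^n) + 1, by omega, by omega, ?_, fun _ => ?_⟩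
    · have h2 : ((Nat.floor (t * 2^n) : ℕ) : ℝ) ≤ t * 2^n := Nat.floor_le (by positivity)
      rw [div_le_iff₀ h2n]
      push_cast
      linarith
    · have h2 : t * 2^n < Nat.floor (t * 2^n) + 1 := Nat.lt_floor_add_one _
      rw [lt_div_iff₀ h2n]
      push_cast
      linarith

lemma cover_J (n : ℕ) (t : ℝ) (ht0 : 0 ≤ t) (ht1 : t ≤ 1) :
    ∃ k : ℕ, k < 2^n ∧ t ≤ ((k:ℝ)+1)/2^n ∧ (1 ≤ k → (k:ℝ)/2^n < t) := by
  have h2n : (0:ℝ) < 2^n := by positivity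
  by_cases hsmall : t ≤ 1/2^n
  · exact ⟨0, by positivity, by simpa using hsmall, fun h => absurd h (by omega)⟩
  · push_neg at hsmall
    have htpos : 1 < t * 2^n := by
      rw [div_lt_iff₀ h2n] at hsmall
      linarith
    have hceil2 : 2 ≤ Nat.ceil (t * 2^n) := by
      have h1 : 1 < Nat.ceil (t * 2^n) := Nat.lt_ceil.mpr (by exact_mod_cast htpos)
      omega
    have hceil_le : Nat.ceil (t * 2^n) ≤ 2^n := by
      apply Nat.ceil_le.mpr
      have : t * 2^n ≤ 2^n := by nlinarith
      exact_mod_cast this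
    refine ⟨Nat.ceil (t * 2^n) - 1, by omega, ?_, fun _ => ?_⟩
    · have h1 : t * 2^n ≤ Nat.ceil (t * 2^n) := Nat.le_ceil _
      rw [le_div_iff₀ h2n]
      have : ((Nat.ceil (t * 2^n) - 1 : ℕ) : ℝ) + 1 = (Nat.ceil (t * 2^n) : ℝ) := by
        have h2 : (1:ℕ) ≤ Nat.ceil (t * 2^n) := by omega
        push_cast [Nat.cast_sub h2]
        ring
      rw [this]
      linarith
    · have h1 : (Nat.ceil (t * 2^n) - 1 : ℕ) < Nat.ceil (t * 2^n) := by omega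
      have h2 : ((Nat.ceil (t * 2^n) - 1 : ℕ) : ℝ) < t * 2^n := by
        exact Nat.lt_ceil.mp h1
      rw [div_lt_iff₀ h2n]
      linarith

end Cover


section KeyLemma

variable (μ : @Measure Ω m2) [IsProbabilityMeasure μ] {u : (Ω → ℝ) → Ω → ℝ}

lemma key_lemma (hm : m1 ≤ m2) (hca : CondAtomless m1 m2 μ) (hu : CondCoherentUtility m1 m2 μ u) (hLeb : LebesgueProp μ u)
    (h : Ω → ℝ) (hh : Measurable[m1] h) (hh0 : ∀ ω, 0 ≤ h ω) (hh1 : ∀ ω, h ω ≤ 1) :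
    ∃ S : Set Ω, MeasurableSet[m2] S ∧ u (indF S) =ᵐ[μ] h := by
  classical
  set A : ℕ → ℕ → Set Ω := fun n k => dy hm μ hca n k with hA
  have hA_meas : ∀ n k, MeasurableSet[m2] (A n k) := fun n k => dy_meas hm μ hca n k
  set ψ : ℕ → ℕ → Ω → ℝ := fun n k => u (indF (A n k)) with hψ
  have hψ_meas : ∀ n k, Measurable[m1] (ψ n k) := fun n k =>
    (hu.measurable_map _ (indF_meas (hA_meas n k)) (indF_bdd _)).1
  -- the threshold function
  set term : ℕ × ℕ → Ω → ℝ := fun p ω =>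
    if h ω ≤ ψ p.1 p.2 ω then (if p.2 ≤ 2^p.1 then (p.2:ℝ)/2^p.1 else 1) else 1 with hterm
  set τ : Ω → ℝ := fun ω => ⨅ p : ℕ × ℕ, term p ω with hτ
  have hDle1 : ∀ p : ℕ × ℕ, (if p.2 ≤ 2^p.1 then (p.2:ℝ)/2^p.1 else 1) ≤ 1 := by
    intro p
    split
    · rw [div_le_one (by positivity)]
      exact_mod_cast (by assumption : p.2 ≤ 2^p.1)
    · exact le_refl 1
  have hDge0 : ∀ p : ℕ × ℕ, (0:ℝ) ≤ (if p.2 ≤ 2^p.1 then (p.2:ℝ)/2^p.1 else 1) := by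
    intro p
    split
    · positivity
    · norm_num
  have hterm_le1 : ∀ p ω, term p ω ≤ 1 := by
    intro p ω
    rw [hterm]
    simp only
    split
    · exact hDle1 p
    · exact le_refl 1
  have hterm_ge0 : ∀ p ω, 0 ≤ term p ω := by
    intro p ω
    rw [hterm]
    simp only
    split
    · exact hDge0 p
    · norm_num
  have hbdd : ∀ ω, BddBelow (Set.range fun p : ℕ × ℕ => term p ω) := by
    intro ω
    exact ⟨0, fun y ⟨p, hp⟩ => hp ▸ hterm_ge0 p ω⟩
  have hτ0 : ∀ ω, 0 ≤ τ ω := fun ω => le_ciInf fun p => hterm_ge0 p ω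
  have hτ1 : ∀ ω, τ ω ≤ 1 := fun ω => le_trans (ciInf_le (hbdd ω) (0, 1)) (hterm_le1 (0,1) ω)
  have hτ_meas : Measurable[m1] τ := by
    apply Measurable.iInf
    intro p
    apply Measurable.ite (measurableSet_le hh (hψ_meas p.1 p.2)) <;> exact measurable_const
  -- F1 : pointwise lower bound property
  have hF1 : ∀ (ω : Ω) (n k : ℕ), k ≤ 2^n → (k:ℝ)/2^n < τ ω → ¬ (h ω ≤ ψ n k ω) := by
    intro ω n k hk hlt hcontra
    have : term (n, k) ω = (k:ℝ)/2^n := by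
      simp only [hterm, hcontra, if_true, hk, if_pos]
    have h2 : τ ω ≤ (k:ℝ)/2^n := by
      rw [← this]
      exact ciInf_le (hbdd ω) (n, k)
    linarith
  -- a.e. monotonicity of ψ along dyadic order
  have hmono : ∀ᵐ ω ∂μ, ∀ p q : ℕ × ℕ, p.2 * 2^q.1 ≤ q.2 * 2^p.1 → ψ p.1 p.2 ω ≤ ψ q.1 q.2 ω := by
    rw [ae_all_iff]
    intro p
    rw [ae_all_iff]
    intro q
    by_cases hpq : p.2 * 2^q.1 ≤ q.2 * 2^p.1
    · have hincl : A p.1 p.2 ⊆ A q.1 q.2 := dy_cross hm μ hca hpq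
      have := u_mono μ hu (indF (A p.1 p.2)) (indF (A q.1 q.2))
        (indF_meas (hA_meas p.1 p.2)) (indF_bdd _) (indF_meas (hA_meas q.1 q.2)) (indF_bdd _)
        (fun ω => Set.indicator_le_indicator_of_subset hincl (fun _ => zero_le_one) ω)
      filter_upwards [this] with ω h1 _
      exact h1
    · filter_upwards with ω h1
      exact absurd h1 hpq
  -- F2 : a.e. upper bound property
  have hF2 : ∀ᵐ ω ∂μ, ∀ (n k : ℕ), k ≤ 2^n → τ ω < (k:ℝ)/2^n → h ω ≤ ψ n k ω := by
    filter_upwards [hmono] with ω hmono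
    intro n k hk hlt
    obtain ⟨p, hp⟩ := exists_lt_of_ciInf_lt hlt
    by_cases hcond : h ω ≤ ψ p.1 p.2 ω
    · -- the if-branch was taken
      have hterm_eq : term p ω = (if p.2 ≤ 2^p.1 then (p.2:ℝ)/2^p.1 else 1) := by
        simp only [hterm, hcond, if_true]
      rw [hterm_eq] at hp
      have hple : p.2 ≤ 2^p.1 := by
        by_contra hc
        rw [if_neg hc] at hp
        have : (k:ℝ)/2^n ≤ 1 := by
          rw [div_le_one (by positivity)]
          exact_mod_cast hk
        linarith
      rw [if_pos hple] at hp
      have hcast : p.2 * 2^n ≤ k * 2^p.1 := by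
        have h2 : ((p.2:ℝ) * 2^n) < k * 2^p.1 := by
          rw [div_lt_div_iff₀ (by positivity) (by positivity)] at hp
          linarith
        exact_mod_cast h2.le
      exact le_trans hcond (hmono p (n, k) hcast)
    · simp only [hterm, if_neg hcond] at hp
      have : (k:ℝ)/2^n ≤ 1 := by
        rw [div_le_one (by positivity)]
        exact_mod_cast hk
      linarith
  -- the intervals
  set I : ℕ → ℕ → Set Ω := fun n k =>
    {ω | ((k:ℝ)-1)/2^n ≤ τ ω ∧ (k < 2^n → τ ω < (k:ℝ)/2^n)} with hI
  set J : ℕ → ℕ → Set Ω := fun n k =>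
    {ω | τ ω ≤ ((k:ℝ)+1)/2^n ∧ (1 ≤ k → (k:ℝ)/2^n < τ ω)} with hJ
  have hI_meas : ∀ n k, MeasurableSet[m1] (I n k) := by
    intro n k
    by_cases hk : k < 2^n
    · have e : I n k = {ω | ((k:ℝ)-1)/2^n ≤ τ ω} ∩ {ω | τ ω < (k:ℝ)/2^n} := by
        ext ω; simp [hI, hk]
      rw [e]
      exact (measurableSet_le measurable_const hτ_meas).inter
        (measurableSet_lt hτ_meas measurable_const)
    · have e : I n k = {ω | ((k:ℝ)-1)/2^n ≤ τ ω} := by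
        ext ω; simp [hI, hk]
      rw [e]
      exact measurableSet_le measurable_const hτ_meas
  have hJ_meas : ∀ n k, MeasurableSet[m1] (J n k) := by
    intro n k
    by_cases hk : 1 ≤ k
    · have e : J n k = {ω | τ ω ≤ ((k:ℝ)+1)/2^n} ∩ {ω | (k:ℝ)/2^n < τ ω} := by
        ext ω; simp [hJ, hk]
      rw [e]
      exact (measurableSet_le hτ_meas measurable_const).inter
        (measurableSet_lt measurable_const hτ_meas)
    · have e : J n k = {ω | τ ω ≤ ((k:ℝ)+1)/2^n} := by
        ext ω; simp [hJ, hk]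
      rw [e]
      exact measurableSet_le hτ_meas measurable_const
  -- I cover and disjointness
  have hI_cover : ∀ (n : ℕ) ω, ∃ k : ℕ, 1 ≤ k ∧ k ≤ 2^n ∧ ω ∈ I n k := by
    intro n ω
    obtain ⟨k, h1, h2, h3, h4⟩ := cover_I n (τ ω) (hτ0 ω) (hτ1 ω)
    exact ⟨k, h1, h2, h3, h4⟩
  have hI_disj : ∀ (n k k' : ℕ), 1 ≤ k → k ≤ 2^n → 1 ≤ k' → k' ≤ 2^n → k < k' →
      ∀ ω, ω ∈ I n k → ω ∈ I n k' → False := by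
    intro n k k' hk1 hk2 hk1' hk2' hkk ω h1 h2
    have h2n : (0:ℝ) < 2^n := by positivity
    have hklt : k < 2^n := by omega
    have ha := h1.2 hklt
    have hb := h2.1
    have hlt2 : ((k':ℝ)-1)/2^n < (k:ℝ)/2^n := lt_of_le_of_lt hb ha
    rw [div_lt_div_iff₀ h2n h2n] at hlt2
    have hcast : (k:ℝ) + 1 ≤ (k':ℝ) := by exact_mod_cast hkk
    nlinarith
  have hJ_disj : ∀ (n k k' : ℕ), k < 2^n → k' < 2^n → k < k' →
      ∀ ω, ω ∈ J n k → ω ∈ J n k' → False := by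
    intro n k k' hk2 hk2' hkk ω h1 h2
    have h2n : (0:ℝ) < 2^n := by positivity
    have ha := h1.1
    have hb := h2.2 (by omega)
    have hlt2 : ((k:ℝ)+1)/2^n < ((k:ℝ)+1)/2^n := by
      have hcast : (k:ℝ) + 1 ≤ (k':ℝ) := by exact_mod_cast hkk
      have : ((k:ℝ)+1)/2^n ≤ (k':ℝ)/2^n := by
        rw [div_le_div_iff₀ h2n h2n]
        nlinarith
      linarith
    exact absurd hlt2 (lt_irrefl _)
  have hJ_cover : ∀ (n : ℕ) ω, ∃ k : ℕ, k < 2^n ∧ ω ∈ J n k := by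
    intro n ω
    obtain ⟨k, h1, h2, h3⟩ := cover_J n (τ ω) (hτ0 ω) (hτ1 ω)
    exact ⟨k, h1, h2, h3⟩
  -- the approximating sets
  set U : ℕ → Set Ω := fun n => ⋃ k ∈ Finset.Icc 1 (2^n), A n k ∩ I n k with hUdef
  set L : ℕ → Set Ω := fun n => ⋃ k ∈ Finset.range (2^n), A n k ∩ J n k with hLdef
  set Sstar : Set Ω := ⋃ p : ℕ × ℕ, A p.1 p.2 ∩ τ ⁻¹' Set.Ici ((p.2:ℝ)/2^p.1) with hSdef
  have hU_meas : ∀ n, MeasurableSet[m2] (U n) := fun n =>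
    MeasurableSet.biUnion (Finset.Icc 1 (2^n)).countable_toSet
      (fun k _ => (hA_meas n k).inter (hm _ (hI_meas n k)))
  have hL_meas : ∀ n, MeasurableSet[m2] (L n) := fun n =>
    MeasurableSet.biUnion (Finset.range (2^n)).countable_toSet
      (fun k _ => (hA_meas n k).inter (hm _ (hJ_meas n k)))
  have hS_meas : MeasurableSet[m2] Sstar :=
    MeasurableSet.iUnion fun p => (hA_meas p.1 p.2).inter
      (hm _ (hτ_meas measurableSet_Ici))
  -- membership characterizations
  have hUI_eq : ∀ (n k : ℕ), 1 ≤ k → k ≤ 2^n → ∀ ω ∈ I n k, (ω ∈ U n ↔ ω ∈ A n k) := by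
    intro n k h1 h2 ω hω
    constructor
    · intro hωU
      rw [hUdef] at hωU
      simp only [Set.mem_iUnion, Finset.mem_Icc] at hωU
      obtain ⟨k', ⟨hk1', hk2'⟩, hωA', hωI'⟩ := hωU
      rcases Nat.lt_trichotomy k k' with hlt | heq | hgt
      · exact absurd (hI_disj n k k' h1 h2 hk1' hk2' hlt ω hω hωI') not_false
      · rw [← heq] at hωA'; exact hωA'
      · exact absurd (hI_disj n k' k hk1' hk2' h1 h2 hgt ω hωI' hω) not_false
    · intro hωA
      rw [hUdef]
      simp only [Set.mem_iUnion, Finset.mem_Icc]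
      exact ⟨k, ⟨h1, h2⟩, hωA, hω⟩
  have hLJ_eq : ∀ (n k : ℕ), k < 2^n → ∀ ω ∈ J n k, (ω ∈ L n ↔ ω ∈ A n k) := by
    intro n k h2 ω hω
    constructor
    · intro hωL
      rw [hLdef] at hωL
      simp only [Set.mem_iUnion, Finset.mem_range] at hωL
      obtain ⟨k', hk2', hωA', hωJ'⟩ := hωL
      rcases Nat.lt_trichotomy k k' with hlt | heq | hgt
      · exact absurd (hJ_disj n k k' h2 hk2' hlt ω hω hωJ') not_false
      · rw [← heq] at hωA'; exact hωA'
      · exact absurd (hJ_disj n k' k hk2' h2 hgt ω hωJ' hω) not_false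
    · intro hωA
      rw [hLdef]
      simp only [Set.mem_iUnion, Finset.mem_range]
      exact ⟨k, h2, hωA, hω⟩
  -- L ⊆ Sstar ⊆ U
  have hLS : ∀ n, L n ⊆ Sstar := by
    intro n ω hω
    rw [hLdef] at hω
    simp only [Set.mem_iUnion, Finset.mem_range] at hω
    obtain ⟨k, hk, hωA, hωJ⟩ := hω
    rcases Nat.eq_zero_or_pos k with h0 | h1
    · rw [h0] at hωA
      have : A n 0 = ∅ := dy_zero_eq hm μ hca n
      rw [this] at hωA
      exact absurd hωA (Set.notMem_empty ω)
    · rw [hSdef]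
      refine Set.mem_iUnion.mpr ⟨(n, k), hωA, ?_⟩
      exact le_of_lt (hωJ.2 h1)
  have hSU : ∀ n, Sstar ⊆ U n := by
    intro n ω hω
    rw [hSdef] at hω
    obtain ⟨p, hωA, hωτ⟩ := Set.mem_iUnion.mp hω
    have hωτ' : (p.2:ℝ)/2^p.1 ≤ τ ω := hωτ
    obtain ⟨k0, hk1, hk2, hωI⟩ := hI_cover n ω
    have hmem : ω ∈ A n k0 := by
      by_cases hk0 : k0 < 2^n
      · have hτlt := hωI.2 hk0
        have hlt : (p.2:ℝ)/2^p.1 < (k0:ℝ)/2^n := lt_of_le_of_lt hωτ' hτlt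
        rw [div_lt_div_iff₀ (by positivity) (by positivity)] at hlt
        have hle : p.2 * 2^n ≤ k0 * 2^p.1 := by exact_mod_cast hlt.le
        exact dy_cross hm μ hca hle hωA
      · have hk0eq : k0 = 2^n := by omega
        rw [hk0eq]
        have huniv : A n (2^n) = Set.univ := dy_top hm μ hca n (2^n) le_rfl
        rw [huniv]
        exact Set.mem_univ ω
    exact (hUI_eq n k0 hk1 hk2 ω hωI).mpr hmem
  have hLU : ∀ n, L n ⊆ U n := fun n => (hLS n).trans (hSU n)
  -- conditional measure bounds
  have hciU_eqk : ∀ (n k : ℕ), 1 ≤ k → k ≤ 2^n →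
      ∀ᵐ ω ∂μ, ω ∈ I n k → ci m1 μ (U n) ω = (k:ℝ)/2^n := by
    intro n k h1 h2
    have e1 := ci_inter_m1 μ hm (hU_meas n) (hI_meas n k)
    have e2 := ci_inter_m1 μ hm (hA_meas n k) (hI_meas n k)
    have e3 := dy_ci hm μ hca n k h2
    have eset : U n ∩ I n k = A n k ∩ I n k := by
      ext ω
      constructor
      · rintro ⟨hωU, hωI⟩
        exact ⟨(hUI_eq n k h1 h2 ω hωI).mp hωU, hωI⟩
      · rintro ⟨hωA, hωI⟩
        exact ⟨(hUI_eq n k h1 h2 ω hωI).mpr hωA, hωI⟩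
    filter_upwards [e1, e2, e3] with ω e1 e2 e3 hω
    have c1 : ci m1 μ (U n ∩ I n k) ω = ci m1 μ (A n k ∩ I n k) ω := by rw [eset]
    rw [e1, e2] at c1
    rw [Set.indicator_of_mem hω, Set.indicator_of_mem hω] at c1
    rw [c1, e3]
  have hciL_eqk : ∀ (n k : ℕ), k < 2^n →
      ∀ᵐ ω ∂μ, ω ∈ J n k → ci m1 μ (L n) ω = (k:ℝ)/2^n := by
    intro n k h2
    have e1 := ci_inter_m1 μ hm (hL_meas n) (hJ_meas n k)
    have e2 := ci_inter_m1 μ hm (hA_meas n k) (hJ_meas n k)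
    have e3 := dy_ci hm μ hca n k (le_of_lt h2)
    have eset : L n ∩ J n k = A n k ∩ J n k := by
      ext ω
      constructor
      · rintro ⟨hωL, hωJ⟩
        exact ⟨(hLJ_eq n k h2 ω hωJ).mp hωL, hωJ⟩
      · rintro ⟨hωA, hωJ⟩
        exact ⟨(hLJ_eq n k h2 ω hωJ).mpr hωA, hωJ⟩
    filter_upwards [e1, e2, e3] with ω e1 e2 e3 hω
    have c1 : ci m1 μ (L n ∩ J n k) ω = ci m1 μ (A n k ∩ J n k) ω := by rw [eset]
    rw [e1, e2] at c1
    rw [Set.indicator_of_mem hω, Set.indicator_of_mem hω] at c1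
    rw [c1, e3]
  have hciU_le : ∀ n, ∀ᵐ ω ∂μ, ci m1 μ (U n) ω ≤ τ ω + 1/2^n := by
    intro n
    have hall : ∀ᵐ ω ∂μ, ∀ k : ℕ, 1 ≤ k → k ≤ 2^n →
        (ω ∈ I n k → ci m1 μ (U n) ω = (k:ℝ)/2^n) := by
      rw [ae_all_iff]
      intro k
      by_cases hk : 1 ≤ k ∧ k ≤ 2^n
      · filter_upwards [hciU_eqk n k hk.1 hk.2] with ω hω h1 h2
        exact hω
      · filter_upwards with ω h1 h2
        exact absurd ⟨h1, h2⟩ hk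
    filter_upwards [hall] with ω hall
    obtain ⟨k, hk1, hk2, hωI⟩ := hI_cover n ω
    rw [hall k hk1 hk2 hωI]
    have hlow := hωI.1
    have hdd : ((k:ℝ)-1)/2^n + 1/2^n = (k:ℝ)/2^n := by
      rw [← add_div]
      ring_nf
    linarith
  have hciL_ge : ∀ n, ∀ᵐ ω ∂μ, τ ω - 1/2^n ≤ ci m1 μ (L n) ω := by
    intro n
    have hall : ∀ᵐ ω ∂μ, ∀ k : ℕ, k < 2^n →
        (ω ∈ J n k → ci m1 μ (L n) ω = (k:ℝ)/2^n) := by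
      rw [ae_all_iff]
      intro k
      by_cases hk : k < 2^n
      · filter_upwards [hciL_eqk n k hk] with ω hω h1
        exact hω
      · filter_upwards with ω h1
        exact absurd h1 hk
    filter_upwards [hall] with ω hall
    obtain ⟨k, hk2, hωJ⟩ := hJ_cover n ω
    rw [hall k hk2 hωJ]
    have hup := hωJ.1
    have hdd : ((k:ℝ)+1)/2^n - 1/2^n = (k:ℝ)/2^n := by
      rw [div_sub_div_same]
      ring_nf
    linarith
  -- τ is integrable
  have hτ_int : Integrable τ μ := by
    refine Integrable.mono' (integrable_const (1:ℝ)) ?_ ?_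
    · exact ((hτ_meas.mono hm le_rfl).stronglyMeasurable).aestronglyMeasurable
    · filter_upwards with ω
      rw [Real.norm_eq_abs, abs_le]
      exact ⟨by linarith [hτ0 ω], hτ1 ω⟩
  -- smallness of U \ L
  have hUL_small : ∀ n, μ (U n \ L n) ≤ ENNReal.ofReal (2/2^n) := by
    intro n
    have hmeasUL : MeasurableSet[m2] (U n \ L n) := (hU_meas n).diff (hL_meas n)
    have h1 : (μ (U n \ L n)).toReal = ∫ ω, ci m1 μ (U n \ L n) ω ∂μ :=
      (ci_integral μ hm hmeasUL).symm
    have e := ci_diff (m1 := m1) μ (hL_meas n) (hU_meas n) (hLU n)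
    have h2 : ∫ ω, ci m1 μ (U n \ L n) ω ∂μ
        = ∫ ω, (ci m1 μ (U n) ω - ci m1 μ (L n) ω) ∂μ := integral_congr_ae e
    have h3 : ∫ ω, (ci m1 μ (U n) ω - ci m1 μ (L n) ω) ∂μ
        = (∫ ω, ci m1 μ (U n) ω ∂μ) - ∫ ω, ci m1 μ (L n) ω ∂μ :=
      integral_sub (ci_integrable μ (U n)) (ci_integrable μ (L n))
    have h4 : ∫ ω, ci m1 μ (U n) ω ∂μ ≤ ∫ ω, (τ ω + 1/2^n) ∂μ :=
      integral_mono_ae (ci_integrable μ (U n)) (hτ_int.add (integrable_const _)) (hciU_le n)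
    have h5 : ∫ ω, (τ ω - 1/2^n) ∂μ ≤ ∫ ω, ci m1 μ (L n) ω ∂μ :=
      integral_mono_ae ((hτ_int.sub (integrable_const _))) (ci_integrable μ (L n)) (hciL_ge n)
    have h6 : ∫ ω, (τ ω + 1/2^n) ∂μ = (∫ ω, τ ω ∂μ) + 1/2^n := by
      rw [integral_add hτ_int (integrable_const _), integral_const]
      simp
    have h7 : ∫ ω, (τ ω - 1/2^n) ∂μ = (∫ ω, τ ω ∂μ) - 1/2^n := by
      rw [integral_sub hτ_int (integrable_const _), integral_const]
      simp
    have h8 : (μ (U n \ L n)).toReal ≤ 2/2^n := by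
      rw [h1, h2, h3]
      rw [h6] at h4
      rw [h7] at h5
      have h2n : (0:ℝ) < 2^n := by positivity
      have : (2:ℝ)/2^n = 1/2^n + 1/2^n := by ring
      linarith
    rw [← ENNReal.ofReal_toReal (measure_ne_top μ (U n \ L n))]
    exact ENNReal.ofReal_le_ofReal h8
  -- the u-value bounds
  have hU_ge : ∀ n, ∀ᵐ ω ∂μ, h ω ≤ u (indF (U n)) ω := by
    intro n
    have hloc : ∀ k : ℕ, 1 ≤ k → k ≤ 2^n →
        ∀ᵐ ω ∂μ, ω ∈ I n k → u (indF (U n)) ω = ψ n k ω := by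
      intro k h1 h2
      apply u_eq_on μ hu (hI_meas n k) (indF (U n)) (indF (A n k))
        (indF_meas (hU_meas n)) (indF_bdd _) (indF_meas (hA_meas n k)) (indF_bdd _)
      intro ω hω
      have hiff := hUI_eq n k h1 h2 ω hω
      by_cases hωA : ω ∈ A n k
      · rw [indF, indF, Set.indicator_of_mem (hiff.mpr hωA), Set.indicator_of_mem hωA]
      · rw [indF, indF, Set.indicator_of_notMem (fun hc => hωA (hiff.mp hc)),
          Set.indicator_of_notMem hωA]
    have hone : ∀ᵐ ω ∂μ, ψ n (2^n) ω = 1 := by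
      have e1 : A n (2^n) = Set.univ := dy_top hm μ hca n (2^n) le_rfl
      have e2 : indF (A n (2^n)) = fun _ => (1:ℝ) := by
        rw [e1]; funext ω; simp [indF]
      have e3 : ψ n (2^n) = u (fun _ => (1:ℝ)) := by rw [hψ]; simp only; rw [e2]
      rw [e3]
      filter_upwards [u_const μ hu 1] with ω hω
      exact hω
    have hall : ∀ᵐ ω ∂μ, ∀ k : ℕ, 1 ≤ k → k ≤ 2^n →
        (ω ∈ I n k → u (indF (U n)) ω = ψ n k ω) := by
      rw [ae_all_iff]
      intro k
      by_cases hk : 1 ≤ k ∧ k ≤ 2^n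
      · filter_upwards [hloc k hk.1 hk.2] with ω hω h1 h2
        exact hω
      · filter_upwards with ω h1 h2
        exact absurd ⟨h1, h2⟩ hk
    filter_upwards [hall, hF2, hone] with ω hall hF2 hone
    obtain ⟨k, h1, h2, hωI⟩ := hI_cover n ω
    rw [hall k h1 h2 hωI]
    by_cases hk : k < 2^n
    · exact hF2 n k h2 (hωI.2 hk)
    · have hkeq : k = 2^n := by omega
      rw [hkeq, hone]
      exact hh1 ω
  have hL_le : ∀ n, ∀ᵐ ω ∂μ, u (indF (L n)) ω ≤ h ω := by
    intro n
    have hloc : ∀ k : ℕ, k < 2^n →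
        ∀ᵐ ω ∂μ, ω ∈ J n k → u (indF (L n)) ω = ψ n k ω := by
      intro k h2
      apply u_eq_on μ hu (hJ_meas n k) (indF (L n)) (indF (A n k))
        (indF_meas (hL_meas n)) (indF_bdd _) (indF_meas (hA_meas n k)) (indF_bdd _)
      intro ω hω
      have hiff := hLJ_eq n k h2 ω hω
      by_cases hωA : ω ∈ A n k
      · rw [indF, indF, Set.indicator_of_mem (hiff.mpr hωA), Set.indicator_of_mem hωA]
      · rw [indF, indF, Set.indicator_of_notMem (fun hc => hωA (hiff.mp hc)),
          Set.indicator_of_notMem hωA]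
    have hzero : ∀ᵐ ω ∂μ, ψ n 0 ω = 0 := by
      have e1 : A n 0 = ∅ := dy_zero_eq hm μ hca n
      have e2 : indF (A n 0) = (0 : Ω → ℝ) := by
        rw [e1]; funext ω; simp [indF]
      have e3 : ψ n 0 = u 0 := by rw [hψ]; simp only; rw [e2]
      rw [e3]
      filter_upwards [hu.map_zero] with ω hω
      exact hω
    have hall : ∀ᵐ ω ∂μ, ∀ k : ℕ, k < 2^n →
        (ω ∈ J n k → u (indF (L n)) ω = ψ n k ω) := by
      rw [ae_all_iff]
      intro k
      by_cases hk : k < 2^n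
      · filter_upwards [hloc k hk] with ω hω h1
        exact hω
      · filter_upwards with ω h1
        exact absurd h1 hk
    filter_upwards [hall, hzero] with ω hall hzero
    obtain ⟨k, h2, hωJ⟩ := hJ_cover n ω
    rw [hall k h2 hωJ]
    rcases Nat.eq_zero_or_pos k with h0 | h1
    · rw [h0, hzero]
      exact hh0 ω
    · have hlt := hωJ.2 h1
      exact le_of_lt (lt_of_not_ge (hF1 ω n k (le_of_lt h2) hlt))
  -- convergence in measure
  have htendsR : Filter.Tendsto (fun n : ℕ => ENNReal.ofReal (2/2^n)) Filter.atTop (nhds 0) := by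
    have h1 : Filter.Tendsto (fun n : ℕ => (2:ℝ)/2^n) Filter.atTop (nhds 0) := by
      have h2 : (fun n : ℕ => (2:ℝ)/2^n) = fun n : ℕ => 2 * (1/2:ℝ)^n := by
        funext n
        rw [div_pow, one_pow]
        ring
      rw [h2]
      have h3 : Filter.Tendsto (fun n : ℕ => ((1:ℝ)/2)^n) Filter.atTop (nhds 0) :=
        tendsto_pow_atTop_nhds_zero_of_lt_one (by norm_num) (by norm_num)
      have := h3.const_mul (2:ℝ)
      simpa using this
    have h4 : ENNReal.ofReal 0 = 0 := by simp
    rw [← h4]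
    exact (ENNReal.continuous_ofReal.tendsto 0).comp h1
  have hdist_sub : ∀ n (S' : Set Ω), L n ⊆ S' → S' ⊆ U n → ∀ ε : ℝ, 0 < ε →
      {x | ε ≤ dist (indF (U n) x) (indF S' x)} ⊆ U n \ L n := by
    intro n S' hLS' hS'U ε hε x hx
    simp only [Set.mem_setOf_eq] at hx
    by_contra hc
    have hiff : indF (U n) x = indF S' x := by
      rw [Set.mem_diff] at hc
      push_neg at hc
      by_cases hxU : x ∈ U n
      · have hxL := hc hxU
        have hxS := hLS' hxL
        rw [indF, indF, Set.indicator_of_mem hxU, Set.indicator_of_mem hxS]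
      · have hxS : x ∉ S' := fun hc2 => hxU (hS'U hc2)
        rw [indF, indF, Set.indicator_of_notMem hxU, Set.indicator_of_notMem hxS]
    rw [hiff] at hx
    simp at hx
    linarith
  have htendsU : TendstoInMeasure μ (fun n => indF (U n)) Filter.atTop (indF Sstar) := by
    rw [tendstoInMeasure_iff_dist]
    intro ε hε
    have hb : ∀ n, μ {x | ε ≤ dist (indF (U n) x) (indF Sstar x)} ≤ ENNReal.ofReal (2/2^n) :=
      fun n => le_trans (measure_mono (hdist_sub n Sstar (hLS n) (hSU n) ε hε)) (hUL_small n)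
    exact tendsto_of_tendsto_of_tendsto_of_le_of_le tendsto_const_nhds htendsR
      (fun n => zero_le) hb
  have htendsL : TendstoInMeasure μ (fun n => indF (L n)) Filter.atTop (indF Sstar) := by
    rw [tendstoInMeasure_iff_dist]
    intro ε hε
    have hsub : ∀ n, {x | ε ≤ dist (indF (L n) x) (indF Sstar x)} ⊆ U n \ L n := by
      intro n x hx
      simp only [Set.mem_setOf_eq] at hx
      by_contra hc
      have hiff : indF (L n) x = indF Sstar x := by
        rw [Set.mem_diff] at hc
        push_neg at hc
        by_cases hxL : x ∈ L n
        · have hxS := hLS n hxL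
          rw [indF, indF, Set.indicator_of_mem hxL, Set.indicator_of_mem hxS]
        · by_cases hxU : x ∈ U n
          · exact absurd (hc hxU) hxL
          · have hxS : x ∉ Sstar := fun hc2 => hxU (hSU n hc2)
            rw [indF, indF, Set.indicator_of_notMem hxL, Set.indicator_of_notMem hxS]
      rw [hiff] at hx
      simp at hx
      linarith
    have hb : ∀ n, μ {x | ε ≤ dist (indF (L n) x) (indF Sstar x)} ≤ ENNReal.ofReal (2/2^n) :=
      fun n => le_trans (measure_mono (hsub n)) (hUL_small n)
    exact tendsto_of_tendsto_of_tendsto_of_le_of_le tendsto_const_nhds htendsR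
      (fun n => zero_le) hb
  -- apply the Lebesgue property
  have hbd1 : ∃ C : ℝ, ∀ (n : ℕ) ω, |indF (U n) ω| ≤ C := by
    refine ⟨1, fun n ω => ?_⟩
    rw [abs_le]
    exact ⟨by linarith [indF_nonneg (U n) ω], indF_le_one (U n) ω⟩
  have hbd2 : ∃ C : ℝ, ∀ (n : ℕ) ω, |indF (L n) ω| ≤ C := by
    refine ⟨1, fun n ω => ?_⟩
    rw [abs_le]
    exact ⟨by linarith [indF_nonneg (L n) ω], indF_le_one (L n) ω⟩
  have hLebU := hLeb (fun n => indF (U n)) (indF Sstar) (fun n => indF_meas (hU_meas n))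
    (indF_meas hS_meas) hbd1 (indF_bdd _) htendsU
  have hLebL := hLeb (fun n => indF (L n)) (indF Sstar) (fun n => indF_meas (hL_meas n))
    (indF_meas hS_meas) hbd2 (indF_bdd _) htendsL
  obtain ⟨ns, hns, haeU⟩ := hLebU.exists_seq_tendsto_ae
  obtain ⟨ms, hms, haeL⟩ := hLebL.exists_seq_tendsto_ae
  refine ⟨Sstar, hS_meas, ?_⟩
  have hgeae : ∀ᵐ ω ∂μ, ∀ n, h ω ≤ u (indF (U n)) ω := ae_all_iff.mpr hU_ge
  have hleae : ∀ᵐ ω ∂μ, ∀ n, u (indF (L n)) ω ≤ h ω := ae_all_iff.mpr hL_le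
  filter_upwards [haeU, haeL, hgeae, hleae] with ω hTU hTL hge hle
  have hge' : h ω ≤ u (indF Sstar) ω :=
    ge_of_tendsto hTU (Filter.Eventually.of_forall fun i => hge (ns i))
  have hle' : u (indF Sstar) ω ≤ h ω :=
    le_of_tendsto hTL (Filter.Eventually.of_forall fun i => hle (ms i))
  linarith

end KeyLemma

end Stmt12Aux

open Stmt12Aux in
/-- If `F₂` is atomless conditionally to `F₁` and `u_{1,2}` is a Lebesgue continuous
conditional coherent utility, then for any bounded `F₁`-measurable `f, g` there are
comonotone `ξ, η ∈ L^∞(F₂)` with `u_{1,2}(ξ) = f`, `u_{1,2}(η) = g`,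
`u_{1,2}(ξ + η) = f + g` and `‖ξ‖_∞, ‖η‖_∞ ≤ 3 max(‖f‖_∞, ‖g‖_∞)`. -/
theorem stmt_12 {Ω : Type*} {m1 m2 : MeasurableSpace Ω} (hm : m1 ≤ m2)
    (μ : @Measure Ω m2) [IsProbabilityMeasure μ]
    (hca : CondAtomless m1 m2 μ)
    (u : (Ω → ℝ) → Ω → ℝ) (hu : CondCoherentUtility m1 m2 μ u)
    (hLeb : LebesgueProp μ u)
    (f g : Ω → ℝ) (hf : Measurable[m1] f) (hfb : Bdd f)
    (hg : Measurable[m1] g) (hgb : Bdd g) :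
    ∃ ξ η : Ω → ℝ, Measurable[m2] ξ ∧ Measurable[m2] η ∧ Bdd ξ ∧ Bdd η ∧
      Comonotone' ξ η ∧
      u ξ =ᵐ[μ] f ∧ u η =ᵐ[μ] g ∧ u (ξ + η) =ᵐ[μ] f + g ∧
      eLpNorm ξ ⊤ μ ≤ 3 * max (eLpNorm f ⊤ μ) (eLpNorm g ⊤ μ) ∧
      eLpNorm η ⊤ μ ≤ 3 * max (eLpNorm f ⊤ μ) (eLpNorm g ⊤ μ) := by
  classical
  set N : ℝ≥0∞ := max (eLpNorm f ⊤ μ) (eLpNorm g ⊤ μ) with hN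
  have hfN : eLpNorm f ⊤ μ ≠ ⊤ := by
    obtain ⟨C, hC⟩ := hfb
    rw [eLpNorm_exponent_top]
    refine ne_top_of_le_ne_top ENNReal.ofReal_ne_top
      (eLpNormEssSup_le_of_ae_bound (C := C) ?_)
    filter_upwards with ω
    rw [Real.norm_eq_abs]
    exact hC ω
  have hgN : eLpNorm g ⊤ μ ≠ ⊤ := by
    obtain ⟨C, hC⟩ := hgb
    rw [eLpNorm_exponent_top]
    refine ne_top_of_le_ne_top ENNReal.ofReal_ne_top
      (eLpNormEssSup_le_of_ae_bound (C := C) ?_)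
    filter_upwards with ω
    rw [Real.norm_eq_abs]
    exact hC ω
  have hN_ne : N ≠ ⊤ := by
    rw [hN]
    exact (max_lt (lt_top_iff_ne_top.mpr hfN) (lt_top_iff_ne_top.mpr hgN)).ne
  set M : ℝ := N.toReal with hM
  have hM0 : 0 ≤ M := ENNReal.toReal_nonneg
  -- a.e. bounds
  have haef : ∀ᵐ ω ∂μ, |f ω| ≤ M := by
    filter_upwards [ae_le_eLpNormEssSup (f := f) (μ := μ)] with ω hω
    have h1 : (‖f ω‖₊ : ℝ≥0∞) ≤ N := le_trans hω (by rw [hN, ← eLpNorm_exponent_top]; exact le_max_left _ _)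
    have h2 := ENNReal.toReal_mono hN_ne h1
    rw [ENNReal.coe_toReal] at h2
    rw [← Real.norm_eq_abs]
    exact h2
  have haeg : ∀ᵐ ω ∂μ, |g ω| ≤ M := by
    filter_upwards [ae_le_eLpNormEssSup (f := g) (μ := μ)] with ω hω
    have h1 : (‖g ω‖₊ : ℝ≥0∞) ≤ N := le_trans hω (by rw [hN, ← eLpNorm_exponent_top]; exact le_max_right _ _)
    have h2 := ENNReal.toReal_mono hN_ne h1
    rw [ENNReal.coe_toReal] at h2
    rw [← Real.norm_eq_abs]
    exact h2
  -- truncations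
  set ft : Ω → ℝ := fun ω => max (-M) (min M (f ω)) with hft
  set gt' : Ω → ℝ := fun ω => max (-M) (min M (g ω)) with hgt
  have hft_meas : Measurable[m1] ft := measurable_const.max (measurable_const.min hf)
  have hgt_meas : Measurable[m1] gt' := measurable_const.max (measurable_const.min hg)
  have hft_bd : ∀ ω, |ft ω| ≤ M := by
    intro ω
    rw [abs_le]
    constructor
    · exact le_max_left _ _
    · exact max_le (by linarith) (min_le_left _ _)
  have hgt_bd : ∀ ω, |gt' ω| ≤ M := by
    intro ω
    rw [abs_le]
    constructor
    · exact le_max_left _ _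
    · exact max_le (by linarith) (min_le_left _ _)
  have hft_ae : ft =ᵐ[μ] f := by
    filter_upwards [haef] with ω hω
    rw [hft]
    simp only
    rw [abs_le] at hω
    rw [min_eq_right hω.2, max_eq_right hω.1]
  have hgt_ae : gt' =ᵐ[μ] g := by
    filter_upwards [haeg] with ω hω
    rw [hgt]
    simp only
    rw [abs_le] at hω
    rw [min_eq_right hω.2, max_eq_right hω.1]
  -- case M = 0 gives ft = 0
  have hM_zero_ft : M = 0 → ∀ ω, ft ω = 0 := by
    intro h0 ω
    have := hft_bd ω
    rw [h0] at this
    simpa using abs_eq_zero.mp (le_antisymm this (abs_nonneg _))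
  have hM_zero_gt : M = 0 → ∀ ω, gt' ω = 0 := by
    intro h0 ω
    have := hgt_bd ω
    rw [h0] at this
    simpa using abs_eq_zero.mp (le_antisymm this (abs_nonneg _))
  -- the target for the key lemma
  set h' : Ω → ℝ := fun ω => 1/2 + ft ω / (6*M) with hh'
  have hh'_meas : Measurable[m1] h' := by
    apply Measurable.add measurable_const
    exact hft_meas.div_const _
  have hfrac_bd : ∀ ω, |ft ω / (6*M)| ≤ 1/6 := by
    intro ω
    rcases eq_or_lt_of_le hM0 with h0 | hMpos
    · rw [hM_zero_ft h0.symm ω]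
      simp
    · rw [abs_div]
      rw [div_le_iff₀ (by positivity : (0:ℝ) < |6*M|)]
      have : |6*M| = 6*M := abs_of_pos (by positivity)
      rw [this]
      have := hft_bd ω
      linarith
  have hh'0 : ∀ ω, 0 ≤ h' ω := by
    intro ω
    have := hfrac_bd ω
    rw [abs_le] at this
    rw [hh']
    simp only
    linarith [this.1]
  have hh'1 : ∀ ω, h' ω ≤ 1 := by
    intro ω
    have := hfrac_bd ω
    rw [abs_le] at this
    rw [hh']
    simp only
    linarith [this.2]
  obtain ⟨S, hS_meas, hus⟩ := key_lemma μ hm hca hu hLeb h' hh'_meas hh'0 hh'1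
  -- the pair
  set ι : Ω → ℝ := indF S with hι
  have hι_meas : Measurable[m2] ι := indF_meas hS_meas
  have hι_bdd : Bdd ι := indF_bdd S
  set β : Ω → ℝ := fun ω => gt' ω - ft ω / 2 - 3*M/2 with hβ
  have hβ_meas : Measurable[m1] β := (hgt_meas.sub (hft_meas.div_const 2)).sub measurable_const
  have hβ_bd : ∀ ω, -(3*M) ≤ β ω ∧ β ω ≤ 0 := by
    intro ω
    have h1 := hft_bd ω
    have h2 := hgt_bd ω
    rw [abs_le] at h1 h2
    constructor
    · rw [hβ]; simp only; linarith
    · rw [hβ]; simp only; linarith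
  have hβ_bdd : Bdd β := by
    refine ⟨3*M, fun ω => ?_⟩
    have := hβ_bd ω
    rw [abs_le]
    constructor <;> linarith [this.1, this.2]
  set ξ : Ω → ℝ := fun ω => 6*M * ι ω + (-(3*M)) with hξdef
  set η : Ω → ℝ := fun ω => 3*M * ι ω + β ω with hηdef
  -- key pointwise identities
  have hid1 : ∀ x : ℝ, 6*M * (1/2 + x/(6*M)) + (-(3*M)) = (if M = 0 then 0 else x) := by
    intro x
    split
    · rename_i h0
      rw [h0]
      norm_num
    · rename_i h0
      field_simp
      ring
  have hid_ft : ∀ ω, 6*M * h' ω + (-(3*M)) = ft ω := by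
    intro ω
    rw [hh']
    simp only
    rw [hid1 (ft ω)]
    split
    · rename_i h0
      rw [hM_zero_ft h0 ω]
    · rfl
  have hid_gt : ∀ ω, 3*M * h' ω + β ω = gt' ω := by
    intro ω
    rcases eq_or_ne M 0 with h0 | h0
    · rw [hh', hβ]
      simp only
      rw [hM_zero_ft h0 ω, hM_zero_gt h0 ω, h0]
      norm_num
    · rw [hh', hβ]
      simp only
      field_simp
      ring
  have hid_sum : ∀ ω, 9*M * h' ω + (β ω + (-(3*M))) = ft ω + gt' ω := by
    intro ω
    rcases eq_or_ne M 0 with h0 | h0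
    · rw [hh', hβ]
      simp only
      rw [hM_zero_ft h0 ω, hM_zero_gt h0 ω, h0]
      norm_num
    · rw [hh', hβ]
      simp only
      field_simp
      ring
  -- u computations
  have huξ : u ξ =ᵐ[μ] f := by
    have h1 := u_affine μ hu ι hι_meas hι_bdd (6*M) (by positivity)
      (fun _ => -(3*M)) measurable_const ⟨3*M, fun ω => by rw [abs_neg, abs_of_nonneg (by positivity)]⟩
    filter_upwards [h1, hus, hft_ae] with ω h1 h2 h3
    have e : u ξ ω = 6*M * u ι ω + (-(3*M)) := h1
    rw [e, h2, hid_ft ω]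
    exact h3
  have huη : u η =ᵐ[μ] g := by
    have h1 := u_affine μ hu ι hι_meas hι_bdd (3*M) (by positivity) β hβ_meas hβ_bdd
    filter_upwards [h1, hus, hgt_ae] with ω h1 h2 h3
    have e : u η ω = 3*M * u ι ω + β ω := h1
    rw [e, h2, hid_gt ω]
    exact h3
  have huξη : u (ξ + η) =ᵐ[μ] f + g := by
    have harg : (ξ + η) = (fun ω => 9*M * ι ω + (β ω + (-(3*M)))) := by
      funext ω
      show ξ ω + η ω = _
      rw [hξdef, hηdef]
      simp only
      ring
    have hβ'_meas : Measurable[m1] (fun ω => β ω + (-(3*M))) := hβ_meas.add measurable_const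
    have hβ'_bdd : Bdd (fun ω => β ω + (-(3*M))) := by
      refine ⟨6*M, fun ω => ?_⟩
      have hb := hβ_bd ω
      show |β ω + (-(3*M))| ≤ 6*M
      rw [abs_le]
      exact ⟨by linarith [hb.1, hb.2, hM0], by linarith [hb.1, hb.2, hM0]⟩
    have h1 := u_affine μ hu ι hι_meas hι_bdd (9*M) (by positivity)
      (fun ω => β ω + (-(3*M))) hβ'_meas hβ'_bdd
    rw [harg]
    filter_upwards [h1, hus, hft_ae, hgt_ae] with ω h1 h2 h3 h4
    have e : u (fun ω => 9*M * ι ω + (β ω + (-(3*M)))) ω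
        = 9*M * u ι ω + (β ω + (-(3*M))) := h1
    rw [e, h2, hid_sum ω]
    show ft ω + gt' ω = f ω + g ω
    rw [h3, h4]
  -- comonotonicity
  have hcom : Comonotone' ξ η := by
    intro ω ω'
    rw [hξdef, hηdef]
    simp only
    by_cases h1 : ω ∈ S <;> by_cases h2 : ω' ∈ S
    · have e1 : ι ω = 1 := by rw [hι, indF]; simp [h1]
      have e2 : ι ω' = 1 := by rw [hι, indF]; simp [h2]
      rw [e1, e2]
      ring_nf
      simp
    · have e1 : ι ω = 1 := by rw [hι, indF]; simp [h1]
      have e2 : ι ω' = 0 := by rw [hι, indF]; simp [h2]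
      rw [e1, e2]
      have hb1 := hβ_bd ω
      have hb2 := hβ_bd ω'
      apply mul_nonneg
      · ring_nf; positivity
      · have : 3*M*1 + β ω - (3*M*0 + β ω') = 3*M + (β ω - β ω') := by ring
        rw [this]
        linarith [hb1.1, hb2.2]
    · have e1 : ι ω = 0 := by rw [hι, indF]; simp [h1]
      have e2 : ι ω' = 1 := by rw [hι, indF]; simp [h2]
      rw [e1, e2]
      have hb1 := hβ_bd ω
      have hb2 := hβ_bd ω'
      have ha : 6*M*0 + (-(3*M)) - (6*M*1 + (-(3*M))) = -(6*M) := by ring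
      have hb : 3*M*0 + β ω - (3*M*1 + β ω') = -(3*M) + (β ω - β ω') := by ring
      rw [ha, hb]
      have h3 : -(3*M) + (β ω - β ω') ≤ 0 := by linarith [hb1.2, hb2.1]
      have h4 : -(6*M) ≤ 0 := by linarith
      have h5 := mul_nonneg (neg_nonneg.mpr h4) (neg_nonneg.mpr h3)
      rw [neg_mul_neg] at h5
      exact h5
    · have e1 : ι ω = 0 := by rw [hι, indF]; simp [h1]
      have e2 : ι ω' = 0 := by rw [hι, indF]; simp [h2]
      rw [e1, e2]
      ring_nf
      simp
  -- boundedness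
  have hξ_bd : ∀ ω, |ξ ω| ≤ 3*M := by
    intro ω
    rw [hξdef]
    simp only
    rw [hι, indF]
    by_cases h1 : ω ∈ S
    · rw [Set.indicator_of_mem h1]
      rw [abs_le]
      constructor <;> [linarith; linarith]
    · rw [Set.indicator_of_notMem h1]
      rw [abs_le]
      constructor <;> [linarith; linarith]
  have hη_bd : ∀ ω, |η ω| ≤ 3*M := by
    intro ω
    rw [hηdef]
    simp only
    have hb := hβ_bd ω
    rw [hι, indF]
    by_cases h1 : ω ∈ S
    · rw [Set.indicator_of_mem h1]
      rw [abs_le]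
      constructor <;> [linarith [hb.1]; linarith [hb.2]]
    · rw [Set.indicator_of_notMem h1]
      rw [abs_le]
      constructor <;> [linarith [hb.1]; linarith [hb.2]]
  have hξ_meas : Measurable[m2] ξ := by
    apply Measurable.add
    · exact (hι_meas.const_mul _)
    · exact measurable_const
  have hη_meas : Measurable[m2] η := by
    apply Measurable.add
    · exact (hι_meas.const_mul _)
    · exact (hβ_meas.mono hm le_rfl)
  -- norm bounds
  have hnorm : ∀ (ζ : Ω → ℝ), (∀ ω, |ζ ω| ≤ 3*M) → eLpNorm ζ ⊤ μ ≤ 3 * N := by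
    intro ζ hζ
    rw [eLpNorm_exponent_top]
    refine le_trans (eLpNormEssSup_le_of_ae_bound (C := 3*M) ?_) ?_
    · filter_upwards with ω
      rw [Real.norm_eq_abs]
      exact hζ ω
    · rw [show (3:ℝ)*M = ((3:ℝ≥0∞)).toReal * M by norm_num]
      rw [← ENNReal.toReal_mul]
      rw [ENNReal.ofReal_toReal]
      exact ENNReal.mul_ne_top (by norm_num) hN_ne
  exact ⟨ξ, η, hξ_meas, hη_meas,
    ⟨3*M, hξ_bd⟩, ⟨3*M, hη_bd⟩, hcom, huξ, huη, huξη,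
    hnorm ξ hξ_bd, hnorm η hη_bd⟩
end
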